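/- arXiv:1008.1501 — 3 statements merged into one kernel-verified Lean document; each statement's English description precedes it below -/
import Mathlib

section
/- Let t ≥ 1 be an integer and let P_t be the profile on the four alternatives {a, b, c, x} consisting of 78t votes: 32t votes a>b>c>x, 24t votes c>x>a>b, 20t votes b>c>x>a, and 2t votes c>b>a>x. If R is any profile of 78t votes obtained from P_t by changing fewer than t/6 of the votes, then a is the unique DQ winner of R and c is the unique Dodgson winner of R; in particular the DQ winner and Dodgson winner of R differ. -/
open Finset Filter

/-- A vote (strict linear order) on `m` alternatives, encoded by its position map:
`v x` is the position of alternative `x`, position `0` being the top.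
`v` ranks `x` above `y` iff `v x < v y`. -/
abbrev Vote (m : ℕ) := Equiv.Perm (Fin m)

/-- A profile is a list of `n` votes, one per agent. -/
abbrev Profile (m n : ℕ) := Fin n → Vote m

/-- `n_{xy}[P]`: the number of votes in `P` ranking `x` above `y`. -/
def nAbove {m n : ℕ} (P : Profile m n) (x y : Fin m) : ℕ :=
  (Finset.univ.filter (fun i => P i x < P i y)).card

/-- `adv[P](x,y) = max (0, n_{xy} - n_{yx})` (truncated subtraction on `ℕ`). -/
def adv {m n : ℕ} (P : Profile m n) (x y : Fin m) : ℕ :=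
  nAbove P x y - nAbove P y x

/-- The Tideman score `Sc_T[P](a) = Σ_{b ≠ a} adv[P](b,a)`. -/
def ScT {m n : ℕ} (P : Profile m n) (a : Fin m) : ℕ :=
  ∑ b ∈ Finset.univ.filter (fun b => b ≠ a), adv P b a

/-- The Dodgson Quick score `Sc_Q[P](a) = Σ_{b ≠ a} ⌈adv[P](b,a)/2⌉`. -/
def ScQ {m n : ℕ} (P : Profile m n) (a : Fin m) : ℕ :=
  ∑ b ∈ Finset.univ.filter (fun b => b ≠ a), (adv P b a + 1) / 2

/-- `a` is a Condorcet-tie winner of `P` iff `adv[P](b,a) = 0` for all `b ≠ a`. -/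
def CondorcetTieWinner {m n : ℕ} (P : Profile m n) (a : Fin m) : Prop :=
  ∀ b, b ≠ a → adv P b a = 0

/-- `a` is a Condorcet winner of `P` iff `adv[P](a,b) > 0` for all `b ≠ a`. -/
def CondorcetWinner {m n : ℕ} (P : Profile m n) (a : Fin m) : Prop :=
  ∀ b, b ≠ a → 0 < adv P a b

/-- `w` is obtained from the vote `v` by one swap of neighbouring alternatives
(the alternatives at consecutive positions `p` and `p+1` are exchanged). -/
def AdjSwapVote {m : ℕ} (v w : Vote m) : Prop :=
  ∃ p q : Fin m, (q : ℕ) = (p : ℕ) + 1 ∧ w = v.trans (Equiv.swap p q)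

/-- `Q` is obtained from the profile `P` by one adjacent swap in one vote. -/
def AdjSwap {m n : ℕ} (P Q : Profile m n) : Prop :=
  ∃ i : Fin n, AdjSwapVote (P i) (Q i) ∧ ∀ j, j ≠ i → Q j = P j

/-- `Reach r k P Q`: `Q` can be obtained from `P` by exactly `k` steps of `r`. -/
def Reach {α : Type*} (r : α → α → Prop) : ℕ → α → α → Prop
  | 0, P, Q => P = Q
  | (k+1), P, Q => ∃ R, r P R ∧ Reach r k R Q

/-- The Dodgson score `Sc_D[P](a)`: the minimum number of adjacent swaps needed to
transform `P` into a profile in which `a` is a Condorcet-tie winner. -/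
noncomputable def ScD {m n : ℕ} (P : Profile m n) (a : Fin m) : ℕ :=
  sInf {k | ∃ Q, Reach AdjSwap k P Q ∧ CondorcetTieWinner Q a}

/-- Variant of the Dodgson score requiring `a` to become a Condorcet winner. -/
noncomputable def ScD' {m n : ℕ} (P : Profile m n) (a : Fin m) : ℕ :=
  sInf {k | ∃ Q, Reach AdjSwap k P Q ∧ CondorcetWinner Q a}

/- Voting situations: multisets of votes.  Scores depend only on the voting
situation of a profile, so we define them directly on multisets. -/

/-- Number of votes in the voting situation `S` ranking `x` above `y`. -/
def snAbove {m : ℕ} (S : Multiset (Vote m)) (x y : Fin m) : ℕ :=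
  (S.filter (fun v => v x < v y)).card

def sadv {m : ℕ} (S : Multiset (Vote m)) (x y : Fin m) : ℕ :=
  snAbove S x y - snAbove S y x

/-- Tideman score of a voting situation. -/
def sScT {m : ℕ} (S : Multiset (Vote m)) (a : Fin m) : ℕ :=
  ∑ b ∈ Finset.univ.filter (fun b => b ≠ a), sadv S b a

/-- Dodgson Quick score of a voting situation. -/
def sScQ {m : ℕ} (S : Multiset (Vote m)) (a : Fin m) : ℕ :=
  ∑ b ∈ Finset.univ.filter (fun b => b ≠ a), (sadv S b a + 1) / 2

def sCondorcetTieWinner {m : ℕ} (S : Multiset (Vote m)) (a : Fin m) : Prop :=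
  ∀ b, b ≠ a → sadv S b a = 0

/-- One adjacent swap applied to one vote of a voting situation. -/
def sAdjSwap {m : ℕ} (S T : Multiset (Vote m)) : Prop :=
  ∃ v ∈ S, ∃ w, AdjSwapVote v w ∧ T = w ::ₘ S.erase v

/-- Dodgson score of a voting situation. -/
noncomputable def sScD {m : ℕ} (S : Multiset (Vote m)) (a : Fin m) : ℕ :=
  sInf {k | ∃ T, Reach sAdjSwap k S T ∧ sCondorcetTieWinner T a}

/-- `a` is a Tideman winner (minimal Tideman score). -/
def sTWinner {m : ℕ} (S : Multiset (Vote m)) (a : Fin m) : Prop :=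
  ∀ b, sScT S a ≤ sScT S b

/-- `a` is a DQ winner (minimal DQ score). -/
def sQWinner {m : ℕ} (S : Multiset (Vote m)) (a : Fin m) : Prop :=
  ∀ b, sScQ S a ≤ sScQ S b

/-- `a` is a Dodgson winner (minimal Dodgson score). -/
def sDWinner {m : ℕ} (S : Multiset (Vote m)) (a : Fin m) : Prop :=
  ∀ b, sScD S a ≤ sScD S b

/-- The vote `a > b > c > x` on alternatives `a = 0`, `b = 1`, `c = 2`, `x = 3`. -/
def vof1 : Vote 4 := 1
/-- The vote `c > x > a > b` (positions: `c ↦ 0`, `x ↦ 1`, `a ↦ 2`, `b ↦ 3`). -/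
def vof2 : Vote 4 := (Equiv.swap 0 2).trans (Equiv.swap 1 3)
/-- The vote `b > c > x > a` (positions: `b ↦ 0`, `c ↦ 1`, `x ↦ 2`, `a ↦ 3`). -/
def vof3 : Vote 4 := (finRotate 4).symm
/-- The vote `c > b > a > x` (positions: `c ↦ 0`, `b ↦ 1`, `a ↦ 2`, `x ↦ 3`). -/
def vof4 : Vote 4 := Equiv.swap 0 2

/-- The profile `P_t` of `78t` votes: `32t` votes `a>b>c>x`, `24t` votes `c>x>a>b`,
`20t` votes `b>c>x>a` and `2t` votes `c>b>a>x`. -/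
def Pt (t : ℕ) : Profile 4 (78 * t) := fun i =>
  if (i : ℕ) < 32 * t then vof1
  else if (i : ℕ) < 56 * t then vof2
  else if (i : ℕ) < 76 * t then vof3
  else vof4

theorem card_filter_lt (n m : ℕ) : ((univ : Finset (Fin n)).filter (fun i : Fin n => (i:ℕ) < m)).card = min m n := by
  have h : ((univ : Finset (Fin n)).filter (fun i : Fin n => (i:ℕ) < m)).card
      = (((univ : Finset (Fin n)).map Fin.valEmbedding).filter (fun j => j < m)).card := by
    rw [Finset.filter_map, Finset.card_map]; rfl
  rw [h, Fin.map_valEmbedding_univ]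
  have h2 : (Iio n).filter (fun j => j < m) = Iio (min m n) := by
    ext j; simp; omega
  rw [h2, Nat.card_Iio]

theorem card_filter_band (n a b : ℕ) (hb : b ≤ n) :
    ((univ : Finset (Fin n)).filter (fun i : Fin n => a ≤ (i:ℕ) ∧ (i:ℕ) < b)).card = b - a := by
  have h : ((univ : Finset (Fin n)).filter (fun i : Fin n => a ≤ (i:ℕ) ∧ (i:ℕ) < b)).card
      = (((univ : Finset (Fin n)).map Fin.valEmbedding).filter (fun j => a ≤ j ∧ j < b)).card := by
    rw [Finset.filter_map, Finset.card_map]; rfl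
  rw [h, Fin.map_valEmbedding_univ]
  have h2 : (Iio n).filter (fun j => a ≤ j ∧ j < b) = Ico a b := by
    ext j; simp [Finset.mem_Ico]; omega
  rw [h2, Nat.card_Ico]

theorem card_filter_Pt (t : ℕ) (p : Vote 4 → Prop) [DecidablePred p] :
    ((univ : Finset (Fin (78*t))).filter (fun i => p (Pt t i))).card =
    (if p vof1 then 32*t else 0) + (if p vof2 then 24*t else 0)
      + (if p vof3 then 20*t else 0) + (if p vof4 then 2*t else 0) := by
  have key : ∀ i : Fin (78*t), (if p (Pt t i) then 1 else 0) =
      (if 0 ≤ (i:ℕ) ∧ (i:ℕ) < 32*t then (if p vof1 then 1 else 0) else 0)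
      + (if 32*t ≤ (i:ℕ) ∧ (i:ℕ) < 56*t then (if p vof2 then 1 else 0) else 0)
      + (if 56*t ≤ (i:ℕ) ∧ (i:ℕ) < 76*t then (if p vof3 then 1 else 0) else 0)
      + (if 76*t ≤ (i:ℕ) ∧ (i:ℕ) < 78*t then (if p vof4 then 1 else 0) else 0) := by
    intro i
    have hi := i.isLt
    by_cases h1 : (i:ℕ) < 32*t
    · rw [show Pt t i = vof1 by simp [Pt, h1],
        if_pos (⟨Nat.zero_le _, h1⟩ : 0 ≤ (i:ℕ) ∧ (i:ℕ) < 32*t),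
        if_neg (by omega : ¬(32*t ≤ (i:ℕ) ∧ (i:ℕ) < 56*t)),
        if_neg (by omega : ¬(56*t ≤ (i:ℕ) ∧ (i:ℕ) < 76*t)),
        if_neg (by omega : ¬(76*t ≤ (i:ℕ) ∧ (i:ℕ) < 78*t))]
      omega
    · by_cases h2 : (i:ℕ) < 56*t
      · rw [show Pt t i = vof2 by simp [Pt, h1, h2],
          if_neg (by omega : ¬(0 ≤ (i:ℕ) ∧ (i:ℕ) < 32*t)),
          if_pos (⟨by omega, h2⟩ : 32*t ≤ (i:ℕ) ∧ (i:ℕ) < 56*t),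
          if_neg (by omega : ¬(56*t ≤ (i:ℕ) ∧ (i:ℕ) < 76*t)),
          if_neg (by omega : ¬(76*t ≤ (i:ℕ) ∧ (i:ℕ) < 78*t))]
        omega
      · by_cases h3 : (i:ℕ) < 76*t
        · rw [show Pt t i = vof3 by simp [Pt, h1, h2, h3],
            if_neg (by omega : ¬(0 ≤ (i:ℕ) ∧ (i:ℕ) < 32*t)),
            if_neg (by omega : ¬(32*t ≤ (i:ℕ) ∧ (i:ℕ) < 56*t)),
            if_pos (⟨by omega, h3⟩ : 56*t ≤ (i:ℕ) ∧ (i:ℕ) < 76*t),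
            if_neg (by omega : ¬(76*t ≤ (i:ℕ) ∧ (i:ℕ) < 78*t))]
          omega
        · rw [show Pt t i = vof4 by simp [Pt, h1, h2, h3],
            if_neg (by omega : ¬(0 ≤ (i:ℕ) ∧ (i:ℕ) < 32*t)),
            if_neg (by omega : ¬(32*t ≤ (i:ℕ) ∧ (i:ℕ) < 56*t)),
            if_neg (by omega : ¬(56*t ≤ (i:ℕ) ∧ (i:ℕ) < 76*t)),
            if_pos (⟨by omega, hi⟩ : 76*t ≤ (i:ℕ) ∧ (i:ℕ) < 78*t)]
          omega
  have hband : ∀ a b : ℕ, b ≤ 78*t → ∀ (c : ℕ),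
      (∑ i : Fin (78*t), if (a ≤ (i:ℕ) ∧ (i:ℕ) < b) then c else 0)
        = (b - a) * c := by
    intro a b hb c
    rw [← Finset.sum_filter, Finset.sum_const, smul_eq_mul, card_filter_band _ _ _ hb]
  rw [Finset.card_filter]
  rw [Finset.sum_congr rfl (fun i _ => key i)]
  rw [Finset.sum_add_distrib, Finset.sum_add_distrib, Finset.sum_add_distrib]
  rw [hband 0 (32*t) (by omega), hband (32*t) (56*t) (by omega),
      hband (56*t) (76*t) (by omega), hband (76*t) (78*t) (by omega)]
  have e : ∀ (c : Prop) (_ : Decidable c) (u v : ℕ), u * (if c then 1 else 0) = if c then u else 0 := by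
    intro c hc u v; split_ifs <;> omega
  rw [e _ _ _ 0, e _ _ _ 0, e _ _ _ 0, e _ _ _ 0,
    show 32*t-0 = 32*t from by omega, show 56*t-32*t=24*t from by omega,
    show 76*t-56*t=20*t from by omega, show 78*t-76*t=2*t from by omega]

theorem nAbove_Pt (t : ℕ) (x y : Fin 4) : nAbove (Pt t) x y =
    (if vof1 x < vof1 y then 32*t else 0) + (if vof2 x < vof2 y then 24*t else 0)
      + (if vof3 x < vof3 y then 20*t else 0) + (if vof4 x < vof4 y then 2*t else 0) :=
  card_filter_Pt t (fun v => v x < v y)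

theorem nAbove_diff_le {m n : ℕ} (P Q : Profile m n) (W : Finset (Fin n))
    (h : ∀ i, i ∉ W → Q i = P i) (x y : Fin m) :
    nAbove Q x y ≤ nAbove P x y + W.card := by
  have hsub : (univ.filter (fun i => Q i x < Q i y)) ⊆
      (univ.filter (fun i => P i x < P i y)) ∪ W := by
    intro i hi
    simp only [Finset.mem_filter, Finset.mem_univ, true_and] at hi
    by_cases hw : i ∈ W
    · exact Finset.mem_union_right _ hw
    · refine Finset.mem_union_left _ ?_
      simp only [Finset.mem_filter, Finset.mem_univ, true_and]
      rw [← h i hw]; exact hi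
  calc nAbove Q x y ≤ ((univ.filter (fun i => P i x < P i y)) ∪ W).card :=
        Finset.card_le_card hsub
    _ ≤ nAbove P x y + W.card := Finset.card_union_le _ _

theorem reach_trans {α : Type*} {r : α → α → Prop} :
    ∀ {k l : ℕ} {P Q S : α}, Reach r k P Q → Reach r l Q S → Reach r (k + l) P S := by
  intro k
  induction k with
  | zero => intro l P Q S h1 h2; have : P = Q := h1; subst this; rw [Nat.zero_add]; exact h2
  | succ k ih =>
      intro l P Q S h1 h2
      obtain ⟨T, hT, hTQ⟩ := h1
      have : k + 1 + l = (k + l) + 1 := by omega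
      rw [this]
      exact ⟨T, hT, ih hTQ h2⟩

theorem reach_flip {m n : ℕ} (F : Finset (Fin n)) :
    ∀ (P Q : Profile m n), (∀ i ∈ F, AdjSwapVote (P i) (Q i)) → (∀ i ∉ F, Q i = P i) →
    Reach AdjSwap F.card P Q := by
  induction F using Finset.induction with
  | empty =>
      intro P Q _ h2
      have : P = Q := funext fun i => (h2 i (Finset.notMem_empty i)).symm
      simpa [Reach] using this
  | @insert j s hj ih =>
      intro P Q h1 h2
      set P' : Profile m n := Function.update P j (Q j) with hP'
      have step : AdjSwap P P' := by
        refine ⟨j, ?_, fun l hl => Function.update_of_ne hl _ _⟩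
        rw [hP', Function.update_self]
        exact h1 j (Finset.mem_insert_self _ _)
      have hrest : Reach AdjSwap s.card P' Q := by
        apply ih
        · intro i hi
          have hij : i ≠ j := fun h => hj (h ▸ hi)
          rw [hP', Function.update_of_ne hij]
          exact h1 i (Finset.mem_insert_of_mem hi)
        · intro i hi
          by_cases hij : i = j
          · subst hij; rw [hP', Function.update_self]
          · rw [hP', Function.update_of_ne hij]
            exact h2 i (by simp [hij, hi])
      rw [Finset.card_insert_of_notMem hj]
      exact ⟨P', step, hrest⟩

theorem exists_ctw {m n : ℕ} (a : Fin m) :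
    ∀ (N : ℕ) (P : Profile m n), (∑ i, ((P i) a : ℕ)) = N →
    ∃ Q, Reach AdjSwap N P Q ∧ ∀ i, ((Q i) a : ℕ) = 0 := by
  intro N
  induction N with
  | zero =>
      intro P hP
      refine ⟨P, (rfl : P = P), fun i => ?_⟩
      exact Finset.sum_eq_zero_iff.mp hP i (Finset.mem_univ i)
  | succ N ih =>
      intro P hP
      have : ∃ i, ((P i) a : ℕ) ≠ 0 := by
        by_contra h
        push_neg at h
        rw [Finset.sum_eq_zero (fun i _ => h i)] at hP
        omega
      obtain ⟨i, hi⟩ := this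
      have hm : ((P i) a : ℕ) - 1 < m := by
        have := ((P i) a).isLt; omega
      set c : Fin m := (P i) a with hc
      set p : Fin m := ⟨(c : ℕ) - 1, hm⟩ with hp
      set w : Vote m := (P i).trans (Equiv.swap p c) with hw
      have hswap : AdjSwapVote (P i) w := by
        refine ⟨p, c, ?_, rfl⟩
        simp only [hp]
        omega
      have hwa : (w a : ℕ) = (c : ℕ) - 1 := by
        rw [hw]
        show ((Equiv.swap p c) ((P i) a) : ℕ) = _
        rw [← hc, Equiv.swap_apply_right]
      set P' : Profile m n := Function.update P i w with hP'2
      have hsum : (∑ j, ((P' j) a : ℕ)) = N := by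
        have h2 : (∑ j, ((P' j) a : ℕ)) = (w a : ℕ) + ∑ j ∈ univ \ {i}, ((P j) a : ℕ) := by
          rw [hP'2]
          rw [show (fun j => ((Function.update P i w j) a : ℕ)) = Function.update (fun j => ((P j) a : ℕ)) i ((w a : ℕ)) from ?_]
          · exact Finset.sum_update_of_mem (Finset.mem_univ i) _ _
          · funext j
            by_cases hj : j = i
            · subst hj; simp
            · simp [Function.update_of_ne hj]
        have h3 : (∑ j, ((P j) a : ℕ)) = ((P i) a : ℕ) + ∑ j ∈ univ \ {i}, ((P j) a : ℕ) := by
          rw [← Finset.sum_update_of_mem (Finset.mem_univ i) (fun j => ((P j) a : ℕ)) (((P i) a : ℕ))]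
          congr 1
          funext j
          by_cases hj : j = i
          · subst hj; simp
          · simp [Function.update_of_ne hj]
        rw [h2]
        rw [h3, ← hc] at hP
        omega
      obtain ⟨Q, hQ, hQ0⟩ := ih P' hsum
      refine ⟨Q, ⟨P', ⟨i, ?_, fun j hj => Function.update_of_ne hj _ _⟩, hQ⟩, hQ0⟩
      rw [hP'2, Function.update_self]
      exact hswap

theorem scd_set_nonempty {m n : ℕ} (P : Profile m n) (a : Fin m) :
    {k | ∃ Q, Reach AdjSwap k P Q ∧ CondorcetTieWinner Q a}.Nonempty := by
  obtain ⟨Q, hQ, hQ0⟩ := exists_ctw a (∑ i, ((P i) a : ℕ)) P rfl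
  refine ⟨_, Q, hQ, fun b _ => ?_⟩
  have : nAbove Q b a = 0 := by
    rw [nAbove, Finset.card_eq_zero, Finset.filter_eq_empty_iff]
    intro i _
    intro h
    rw [Fin.lt_def, hQ0 i] at h
    omega
  rw [adv, this]
  omega

theorem adjswapvote_pairs {m : ℕ} {v w : Vote m} (h : AdjSwapVote v w) :
    ∃ u z : Fin m, u ≠ z ∧ ∀ x y : Fin m, ¬(x = u ∧ y = z) → ¬(x = z ∧ y = u) →
      (v x < v y ↔ w x < w y) := by
  obtain ⟨p, q, hq, hw⟩ := h
  refine ⟨v.symm p, v.symm q, fun he => by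
    have := congrArg v he
    simp only [Equiv.apply_symm_apply] at this
    rw [this] at hq; omega, ?_⟩
  intro x y hex1 hex2
  have key : ∀ z : Fin m, ((w z : ℕ)) = if (v z : ℕ) = (p:ℕ) then (p:ℕ)+1
      else if (v z :ℕ) = (p:ℕ)+1 then (p:ℕ) else (v z : ℕ) := by
    intro z
    rw [hw]
    show ((Equiv.swap p q) (v z) : ℕ) = _
    by_cases h1 : v z = p
    · rw [h1, Equiv.swap_apply_left, if_pos rfl, hq]
    · by_cases h2 : v z = q
      · rw [h2, Equiv.swap_apply_right, if_neg (by omega), if_pos hq]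
      · rw [Equiv.swap_apply_of_ne_of_ne h1 h2, if_neg, if_neg]
        · intro hc; exact h2 (Fin.ext (by rw [hc, ← hq]))
        · intro hc; exact h1 (Fin.ext hc)
  have hex1' : ¬((v x : ℕ) = (p:ℕ) ∧ (v y : ℕ) = (p:ℕ)+1) := by
    intro ⟨e1, e2⟩
    exact hex1 ⟨by rw [Equiv.eq_symm_apply]; exact Fin.ext e1,
      by rw [Equiv.eq_symm_apply]; exact Fin.ext (by rw [e2, ← hq])⟩
  have hex2' : ¬((v x : ℕ) = (p:ℕ)+1 ∧ (v y : ℕ) = (p:ℕ)) := by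
    intro ⟨e1, e2⟩
    exact hex2 ⟨by rw [Equiv.eq_symm_apply]; exact Fin.ext (by rw [e1, ← hq]),
      by rw [Equiv.eq_symm_apply]; exact Fin.ext e2⟩
  rw [Fin.lt_def, Fin.lt_def, key x, key y]
  split_ifs <;> omega

theorem adjswap_nAbove {m n : ℕ} {P S : Profile m n} (h : AdjSwap P S) :
    ∃ u z : Fin m, u ≠ z ∧
      (∀ x y, ¬(x = u ∧ y = z) → ¬(x = z ∧ y = u) → nAbove S x y = nAbove P x y) ∧
      (∀ x y, nAbove S x y ≤ nAbove P x y + 1 ∧ nAbove P x y ≤ nAbove S x y + 1) := by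
  obtain ⟨i, hv, hrest⟩ := h
  obtain ⟨u, z, huz, hpairs⟩ := adjswapvote_pairs hv
  refine ⟨u, z, huz, ?_, ?_⟩
  · intro x y hx hy
    unfold nAbove
    apply congrArg
    apply Finset.filter_congr
    intro j _
    by_cases hj : j = i
    · subst hj; exact (hpairs x y hx hy).symm
    · rw [hrest j hj]
  · intro x y
    constructor
    · have := nAbove_diff_le P S {i} (fun j hj => hrest j (Finset.notMem_singleton.mp hj)) x y
      rw [Finset.card_singleton] at this; exact this
    · have := nAbove_diff_le S P {i} (fun j hj => (hrest j (Finset.notMem_singleton.mp hj)).symm) x y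
      rw [Finset.card_singleton] at this; exact this

theorem scq_step {m n : ℕ} {P S : Profile m n} (a : Fin m) (h : AdjSwap P S) :
    ScQ P a ≤ ScQ S a + 1 := by
  obtain ⟨u, z, huz, heq, hle⟩ := adjswap_nAbove h
  have adveq : ∀ b, ¬(b = u ∧ a = z) → ¬(b = z ∧ a = u) → ¬(a = u ∧ b = z) → ¬(a = z ∧ b = u) →
      adv P b a = adv S b a := by
    intro b h1 h2 h3 h4
    unfold adv
    rw [heq b a h1 h2, heq a b h3 h4]
  by_cases hau : a = u
  · -- special pair is (z, a) direction
    have hz : z ≠ a := fun e => huz (by rw [← hau, e])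
    have hmem : z ∈ univ.filter (fun b => b ≠ a) := by simp [hz]
    unfold ScQ
    rw [← Finset.add_sum_erase _ _ hmem, ← Finset.add_sum_erase _ _ hmem]
    have tail : ∀ b ∈ (univ.filter (fun b => b ≠ a)).erase z,
        (adv P b a + 1) / 2 = (adv S b a + 1) / 2 := by
      intro b hb
      have hbz : b ≠ z := (Finset.mem_erase.mp hb).1
      have hba : b ≠ a := by have := (Finset.mem_erase.mp hb).2; simpa using this
      rw [adveq b (fun ⟨_, e⟩ => huz (by rw [← hau, e])) (fun ⟨e, _⟩ => hbz e)
        (fun ⟨_, e⟩ => hbz e) (fun ⟨e, _⟩ => huz (by rw [← hau, e]))]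
    rw [Finset.sum_congr rfl tail]
    have h1 := hle z a
    have h2 := hle a z
    have : (adv P z a + 1) / 2 ≤ (adv S z a + 1) / 2 + 1 := by
      unfold adv; omega
    omega
  · by_cases haz : a = z
    · have hu : u ≠ a := fun e => huz (by rw [e, haz])
      have hmem : u ∈ univ.filter (fun b => b ≠ a) := by simp [hu]
      unfold ScQ
      rw [← Finset.add_sum_erase _ _ hmem, ← Finset.add_sum_erase _ _ hmem]
      have tail : ∀ b ∈ (univ.filter (fun b => b ≠ a)).erase u,
          (adv P b a + 1) / 2 = (adv S b a + 1) / 2 := by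
        intro b hb
        have hbu : b ≠ u := (Finset.mem_erase.mp hb).1
        have hba : b ≠ a := by have := (Finset.mem_erase.mp hb).2; simpa using this
        rw [adveq b (fun ⟨e, _⟩ => hbu e) (fun ⟨_, e⟩ => hu (e.symm ▸ rfl))
          (fun ⟨e, _⟩ => hu (e.symm ▸ rfl)) (fun ⟨_, e⟩ => hbu e)]
      rw [Finset.sum_congr rfl tail]
      have h1 := hle u a
      have h2 := hle a u
      have : (adv P u a + 1) / 2 ≤ (adv S u a + 1) / 2 + 1 := by
        unfold adv; omega
      omega
    · have : ScQ P a = ScQ S a := by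
        unfold ScQ
        apply Finset.sum_congr rfl
        intro b _
        rw [adveq b (fun ⟨_, e⟩ => haz e) (fun ⟨_, e⟩ => hau e)
          (fun ⟨e, _⟩ => hau e) (fun ⟨e, _⟩ => haz e)]
      omega

theorem scq_le_reach {m n : ℕ} (a : Fin m) :
    ∀ (k : ℕ) (P Q : Profile m n), Reach AdjSwap k P Q → CondorcetTieWinner Q a → ScQ P a ≤ k := by
  intro k
  induction k with
  | zero =>
      intro P Q hr hc
      have : P = Q := hr
      subst this
      unfold ScQ
      rw [Finset.sum_eq_zero]
      intro b hb
      rw [hc b (by simpa using hb)]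
      rfl
  | succ k ih =>
      intro P Q hr hc
      obtain ⟨T, hT, hTQ⟩ := hr
      have := scq_step a hT
      have := ih T Q hTQ hc
      omega

theorem scq_le_scd {m n : ℕ} (P : Profile m n) (a : Fin m) : ScQ P a ≤ ScD P a := by
  have hmem := Nat.sInf_mem (scd_set_nonempty P a)
  obtain ⟨Q, hr, hc⟩ := hmem
  exact scq_le_reach a _ P Q hr hc

/-- Potential: 2 if c (=2) is above a (=0) non-adjacently, 1 if adjacently, 0 otherwise. -/
def phi (v : Vote 4) : ℕ :=
  if (v 0 : ℕ) < (v 2 : ℕ) then 0 else if (v 0 : ℕ) = (v 2 : ℕ) + 1 then 1 else 2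

def Phi {n : ℕ} (X : Profile 4 n) : ℕ := ∑ i, phi (X i)

theorem phi_step {v w : Vote 4} (h : AdjSwapVote v w) : phi v ≤ phi w + 1 := by
  obtain ⟨p, q, hq, hw⟩ := h
  have key : ∀ z : Fin 4, ((w z : ℕ)) = if (v z : ℕ) = (p:ℕ) then (p:ℕ)+1
      else if (v z :ℕ) = (p:ℕ)+1 then (p:ℕ) else (v z : ℕ) := by
    intro z
    rw [hw]
    show ((Equiv.swap p q) (v z) : ℕ) = _
    by_cases h1 : v z = p
    · rw [h1, Equiv.swap_apply_left, if_pos rfl, hq]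
    · by_cases h2 : v z = q
      · rw [h2, Equiv.swap_apply_right, if_neg (by omega), if_pos hq]
      · rw [Equiv.swap_apply_of_ne_of_ne h1 h2, if_neg, if_neg]
        · intro hc; exact h2 (Fin.ext (by rw [hc, ← hq]))
        · intro hc; exact h1 (Fin.ext hc)
  have hne1 : (v 0 : ℕ) ≠ (v 2 : ℕ) := by
    intro hc
    have := v.injective (Fin.ext hc : v 0 = v 2)
    exact absurd this (by decide)
  unfold phi
  rw [key 0, key 2]
  split_ifs <;> omega

theorem Phi_step {n : ℕ} {X X' : Profile 4 n} (h : AdjSwap X X') : Phi X ≤ Phi X' + 1 := by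
  obtain ⟨i, hv, hrest⟩ := h
  unfold Phi
  rw [← Finset.add_sum_erase _ (fun j => phi (X j)) (Finset.mem_univ i),
      ← Finset.add_sum_erase _ (fun j => phi (X' j)) (Finset.mem_univ i)]
  have tail : ∑ j ∈ univ.erase i, phi (X j) = ∑ j ∈ univ.erase i, phi (X' j) := by
    apply Finset.sum_congr rfl
    intro j hj
    rw [hrest j (Finset.mem_erase.mp hj).1]
  have := phi_step hv
  omega

theorem Phi_reach {n : ℕ} :
    ∀ (k : ℕ) (X Q : Profile 4 n), Reach AdjSwap k X Q → Phi X ≤ Phi Q + k := by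
  intro k
  induction k with
  | zero => intro X Q h; have : X = Q := h; subst this; omega
  | succ k ih =>
      intro X Q h
      obtain ⟨T, hT, hTQ⟩ := h
      have := Phi_step hT
      have := ih T Q hTQ
      omega

theorem Phi_final {n : ℕ} (Q : Profile 4 n) (h : adv Q 2 0 = 0) : Phi Q ≤ n := by
  have hle : Phi Q ≤ 2 * nAbove Q 2 0 := by
    have h1 : Phi Q ≤ ∑ i, (if ¬ ((Q i 0 : ℕ) < (Q i 2 : ℕ)) then 2 else 0) := by
      apply Finset.sum_le_sum
      intro i _
      unfold phi
      split_ifs <;> omega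
    have h2 : (∑ i, (if ¬ ((Q i 0 : ℕ) < (Q i 2 : ℕ)) then 2 else 0))
        = 2 * (univ.filter (fun i : Fin n => ¬ ((Q i 0 : ℕ) < (Q i 2 : ℕ)))).card := by
      rw [← Finset.sum_filter, Finset.sum_const, smul_eq_mul, Nat.mul_comm]
    have h3 : (univ.filter (fun i : Fin n => ¬ ((Q i 0 : ℕ) < (Q i 2 : ℕ)))).card = nAbove Q 2 0 := by
      unfold nAbove
      apply congrArg
      apply Finset.filter_congr
      intro i _
      have hne : (Q i 0 : ℕ) ≠ (Q i 2 : ℕ) := by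
        intro hc
        have := (Q i).injective (Fin.ext hc : Q i 0 = Q i 2)
        exact absurd this (by decide)
      rw [Fin.lt_def]
      constructor
      · intro hnlt; omega
      · intro hlt; omega
    omega
  have hcomp : nAbove Q 2 0 + nAbove Q 0 2 ≤ n := by
    have hdisj : Disjoint (univ.filter (fun i : Fin n => Q i 2 < Q i 0))
        (univ.filter (fun i : Fin n => Q i 0 < Q i 2)) := by
      rw [Finset.disjoint_filter]
      intro i _ h1 h2
      exact absurd (h1.trans h2) (lt_irrefl _)
    have := Finset.card_union_le (univ.filter (fun i : Fin n => Q i 2 < Q i 0))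
        (univ.filter (fun i : Fin n => Q i 0 < Q i 2))
    have hcard := Finset.card_union_of_disjoint hdisj
    have hle2 : ((univ.filter (fun i : Fin n => Q i 2 < Q i 0)) ∪
        (univ.filter (fun i : Fin n => Q i 0 < Q i 2))).card ≤ n := by
      have := Finset.card_le_card (Finset.subset_univ ((univ.filter (fun i : Fin n => Q i 2 < Q i 0)) ∪
        (univ.filter (fun i : Fin n => Q i 0 < Q i 2))))
      simpa using this
    unfold nAbove
    omega
  have hadv : nAbove Q 2 0 ≤ nAbove Q 0 2 := by
    unfold adv at h
    omega
  omega

theorem scd0_ge (t : ℕ) (R : Profile 4 (78*t)) :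
    14*t ≤ ScD R 0 + 2 * (univ.filter (fun i => R i ≠ Pt t i)).card := by
  set W := univ.filter (fun i => R i ≠ Pt t i) with hW
  set k := W.card with hk
  have hPhiR : 92*t ≤ Phi R + 2*k := by
    set G := univ.filter (fun i : Fin (78*t) => 32*t ≤ (i:ℕ) ∧ R i = Pt t i) with hG
    have hBcard : (univ.filter (fun i : Fin (78*t) => 32*t ≤ (i:ℕ))).card = 46*t := by
      have : (univ.filter (fun i : Fin (78*t) => 32*t ≤ (i:ℕ)))
          = (univ.filter (fun i : Fin (78*t) => 32*t ≤ (i:ℕ) ∧ (i:ℕ) < 78*t)) := by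
        apply Finset.filter_congr
        intro i _
        have := i.isLt
        constructor
        · intro h; exact ⟨h, this⟩
        · intro h; exact h.1
      rw [this, card_filter_band _ _ _ (le_refl _)]
      omega
    have hsub : (univ.filter (fun i : Fin (78*t) => 32*t ≤ (i:ℕ))) ⊆ G ∪ W := by
      intro i hi
      simp only [Finset.mem_filter, Finset.mem_univ, true_and] at hi
      by_cases hri : R i = Pt t i
      · exact Finset.mem_union_left _ (by simp [hG, hi, hri])
      · exact Finset.mem_union_right _ (by simp [hW, hri])
    have hGcard : 46*t ≤ G.card + k := by
      have h1 := Finset.card_le_card hsub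
      have h2 := Finset.card_union_le G W
      omega
    have hG2 : ∀ i ∈ G, phi (R i) = 2 := by
      intro i hi
      simp only [hG, Finset.mem_filter, Finset.mem_univ, true_and] at hi
      obtain ⟨hi1, hi2⟩ := hi
      rw [hi2]
      have hi3 := i.isLt
      unfold Pt
      rw [if_neg (by omega)]
      by_cases h2 : (i:ℕ) < 56*t
      · rw [if_pos h2]; decide
      · rw [if_neg h2]
        by_cases h3 : (i:ℕ) < 76*t
        · rw [if_pos h3]; decide
        · rw [if_neg h3]; decide
    have hsum : 2 * G.card ≤ Phi R := by
      calc 2 * G.card = ∑ i ∈ G, 2 := by rw [Finset.sum_const, smul_eq_mul, Nat.mul_comm]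
        _ = ∑ i ∈ G, phi (R i) := (Finset.sum_congr rfl hG2).symm
        _ ≤ ∑ i, phi (R i) := Finset.sum_le_sum_of_subset (Finset.subset_univ G)
        _ = Phi R := rfl
    omega
  obtain ⟨Q, hr, hc⟩ := Nat.sInf_mem (scd_set_nonempty R 0)
  have h1 := Phi_reach _ R Q hr
  have h2 := Phi_final Q (hc 2 (by decide))
  unfold ScD
  omega

theorem scd2_le (t : ℕ) (ht : 1 ≤ t) (R : Profile 4 (78*t))
    (hk6 : 6 * (univ.filter (fun i => R i ≠ Pt t i)).card < t) :
    ScD R 2 ≤ 13*t + (univ.filter (fun i => R i ≠ Pt t i)).card := by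
  set W := univ.filter (fun i => R i ≠ Pt t i) with hW
  set k := W.card with hk
  have hWout : ∀ i, i ∉ W → R i = Pt t i := by
    intro i hi
    rw [hW, Finset.mem_filter] at hi
    simpa using hi
  have hup : ∀ x y, nAbove R x y ≤ nAbove (Pt t) x y + k :=
    fun x y => nAbove_diff_le (Pt t) R W hWout x y
  have hlo : ∀ x y, nAbove (Pt t) x y ≤ nAbove R x y + k :=
    fun x y => nAbove_diff_le R (Pt t) W (fun i hi => (hWout i hi).symm) x y
  have h02 : nAbove (Pt t) 0 2 = 32*t := by
    rw [nAbove_Pt, if_pos (by decide), if_neg (by decide), if_neg (by decide), if_neg (by decide)]; omega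
  have h20 : nAbove (Pt t) 2 0 = 46*t := by
    rw [nAbove_Pt, if_neg (by decide), if_pos (by decide), if_pos (by decide), if_pos (by decide)]; omega
  have h32 : nAbove (Pt t) 3 2 = 0 := by
    rw [nAbove_Pt, if_neg (by decide), if_neg (by decide), if_neg (by decide), if_neg (by decide)]
  have h23 : nAbove (Pt t) 2 3 = 78*t := by
    rw [nAbove_Pt, if_pos (by decide), if_pos (by decide), if_pos (by decide), if_pos (by decide)]; omega
  have h12 : nAbove (Pt t) 1 2 = 52*t := by
    rw [nAbove_Pt, if_pos (by decide), if_neg (by decide), if_pos (by decide), if_neg (by decide)]; omega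
  have h21 : nAbove (Pt t) 2 1 = 26*t := by
    rw [nAbove_Pt, if_neg (by decide), if_pos (by decide), if_neg (by decide), if_pos (by decide)]; omega
  set S := univ.filter (fun i : Fin (78*t) => (i:ℕ) < 32*t ∧ R i = Pt t i) with hS
  have hSvof1 : ∀ i ∈ S, R i = vof1 := by
    intro i hi
    rw [hS, Finset.mem_filter] at hi
    obtain ⟨_, hi1, hi2⟩ := hi
    rw [hi2]
    unfold Pt
    rw [if_pos hi1]
  have hScard : 32*t ≤ S.card + k := by
    have hsub : (univ.filter (fun i : Fin (78*t) => (i:ℕ) < 32*t)) ⊆ S ∪ W := by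
      intro i hi
      simp only [Finset.mem_filter, Finset.mem_univ, true_and] at hi
      by_cases hri : R i = Pt t i
      · exact Finset.mem_union_left _ (by simp [hS, hi, hri])
      · exact Finset.mem_union_right _ (by simp [hW, hri])
    have h1 := Finset.card_le_card hsub
    have h2 := Finset.card_union_le S W
    have h3 : (univ.filter (fun i : Fin (78*t) => (i:ℕ) < 32*t)).card = 32*t := by
      rw [card_filter_lt]; omega
    omega
  have hN : 13*t + k ≤ S.card := by omega
  obtain ⟨F, hFS, hFcard⟩ := Finset.exists_subset_card_eq (s := S) (n := 13*t + k) hN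
  set Q : Profile 4 (78*t) := fun i => if i ∈ F then (R i).trans (Equiv.swap 1 2) else R i with hQ
  have hQF : ∀ i ∈ F, Q i = vof1.trans (Equiv.swap 1 2) := by
    intro i hi
    rw [hQ]
    simp only [hi, if_true]
    rw [hSvof1 i (hFS hi)]
  have hQnF : ∀ i ∉ F, Q i = R i := by
    intro i hi
    rw [hQ]
    simp [hi]
  have hreach : Reach AdjSwap (13*t + k) R Q := by
    rw [← hFcard]
    apply reach_flip F R Q
    · intro i hi
      rw [hQ]
      simp only [hi, if_true]
      exact ⟨1, 2, by decide, rfl⟩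
    · exact hQnF
  have eqpair : ∀ x y : Fin 4, (vof1.trans (Equiv.swap 1 2) x < vof1.trans (Equiv.swap 1 2) y ↔ vof1 x < vof1 y) →
      nAbove Q x y = nAbove R x y := by
    intro x y hiff
    unfold nAbove
    apply congrArg
    apply Finset.filter_congr
    intro i _
    by_cases hif : i ∈ F
    · rw [hQF i hif, hSvof1 i (hFS hif)]
      exact hiff
    · rw [hQnF i hif]
  have e02 : nAbove Q 0 2 = nAbove R 0 2 := eqpair 0 2 (by decide)
  have e20 : nAbove Q 2 0 = nAbove R 2 0 := eqpair 2 0 (by decide)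
  have e32 : nAbove Q 3 2 = nAbove R 3 2 := eqpair 3 2 (by decide)
  have e23 : nAbove Q 2 3 = nAbove R 2 3 := eqpair 2 3 (by decide)
  have hF12 : F ⊆ univ.filter (fun i => R i 1 < R i 2) := by
    intro i hi
    simp only [Finset.mem_filter, Finset.mem_univ, true_and]
    rw [hSvof1 i (hFS hi)]
    decide
  have e12 : nAbove Q 1 2 = nAbove R 1 2 - (13*t + k) := by
    have hset : univ.filter (fun i => Q i 1 < Q i 2) = (univ.filter (fun i => R i 1 < R i 2)) \ F := by
      ext i
      simp only [Finset.mem_filter, Finset.mem_sdiff, Finset.mem_univ, true_and]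
      by_cases hif : i ∈ F
      · rw [hQF i hif]
        constructor
        · intro h; exact absurd h (by decide)
        · intro ⟨_, hne⟩; exact absurd hif hne
      · rw [hQnF i hif]
        constructor
        · intro h; exact ⟨h, hif⟩
        · intro ⟨h, _⟩; exact h
    rw [nAbove, hset, Finset.card_sdiff_of_subset hF12, hFcard]
    rfl
  have e21 : nAbove Q 2 1 = nAbove R 2 1 + (13*t + k) := by
    have hdisj : Disjoint (univ.filter (fun i => R i 2 < R i 1)) F := by
      rw [Finset.disjoint_left]
      intro i hi hif
      simp only [Finset.mem_filter, Finset.mem_univ, true_and] at hi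
      rw [hSvof1 i (hFS hif)] at hi
      exact absurd hi (by decide)
    have hset : univ.filter (fun i => Q i 2 < Q i 1) = (univ.filter (fun i => R i 2 < R i 1)) ∪ F := by
      ext i
      simp only [Finset.mem_filter, Finset.mem_union, Finset.mem_univ, true_and]
      by_cases hif : i ∈ F
      · rw [hQF i hif]
        constructor
        · intro _; exact Or.inr hif
        · intro _; decide
      · rw [hQnF i hif]
        constructor
        · intro h; exact Or.inl h
        · intro h
          rcases h with h | h
          · exact h
          · exact absurd h hif
    rw [nAbove, hset, Finset.card_union_of_disjoint hdisj, hFcard]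
    rfl
  have hctw : CondorcetTieWinner Q 2 := by
    intro b hb
    have hupl := hup 0 2; have hlol := hlo 0 2
    have hup2 := hup 2 0; have hlo2 := hlo 2 0
    have hup3 := hup 3 2; have hlo3 := hlo 3 2
    have hup4 := hup 2 3; have hlo4 := hlo 2 3
    have hup5 := hup 1 2; have hlo5 := hlo 1 2
    have hup6 := hup 2 1; have hlo6 := hlo 2 1
    have hb3 : b = 0 ∨ b = 1 ∨ b = 3 := by
      have h4 := b.isLt
      have h5 : (b:ℕ) ≠ 2 := fun h => hb (Fin.ext h)
      have h6 : (b:ℕ) = 0 ∨ (b:ℕ) = 1 ∨ (b:ℕ) = 3 := by omega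
      rcases h6 with h6 | h6 | h6
      · exact Or.inl (Fin.ext h6)
      · exact Or.inr (Or.inl (Fin.ext h6))
      · exact Or.inr (Or.inr (Fin.ext h6))
    rcases hb3 with rfl | rfl | rfl <;> unfold adv <;> omega
  exact Nat.sInf_le ⟨Q, hreach, hctw⟩

/-- If `R` is obtained from `P_t` by changing fewer than `t/6` of the votes, then
`a = 0` is the unique DQ winner of `R` and `c = 2` is the unique Dodgson winner
of `R`; in particular the set of DQ winners of `R` differs from the set of
Dodgson winners of `R`. -/
theorem stmt_15 (t : ℕ) (ht : 1 ≤ t) (R : Profile 4 (78 * t))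
    (hR : 6 * (Finset.univ.filter (fun i => R i ≠ Pt t i)).card < t) :
    (∀ y : Fin 4, y ≠ 0 → ScQ R 0 < ScQ R y) ∧
    (∀ y : Fin 4, y ≠ 2 → ScD R 2 < ScD R y) ∧
    {y : Fin 4 | ∀ b, ScQ R y ≤ ScQ R b} ≠ {y : Fin 4 | ∀ b, ScD R y ≤ ScD R b} := by
  have hD2 := scd2_le t ht R hR
  have hD0 := scd0_ge t R
  have hQD1 := scq_le_scd R 1
  have hQD3 := scq_le_scd R 3
  set W := Finset.univ.filter (fun i => R i ≠ Pt t i) with hW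
  set k := W.card with hk
  have hWout : ∀ i, i ∉ W → R i = Pt t i := by
    intro i hi
    rw [hW, Finset.mem_filter] at hi
    simpa using hi
  have hup : ∀ x y, nAbove R x y ≤ nAbove (Pt t) x y + k :=
    fun x y => nAbove_diff_le (Pt t) R W hWout x y
  have hlo : ∀ x y, nAbove (Pt t) x y ≤ nAbove R x y + k :=
    fun x y => nAbove_diff_le R (Pt t) W (fun i hi => (hWout i hi).symm) x y
  have h01 : nAbove (Pt t) 0 1 = 56*t := by
    rw [nAbove_Pt, if_pos (by decide), if_pos (by decide), if_neg (by decide), if_neg (by decide)]; omega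
  have h10 : nAbove (Pt t) 1 0 = 22*t := by
    rw [nAbove_Pt, if_neg (by decide), if_neg (by decide), if_pos (by decide), if_pos (by decide)]; omega
  have h02 : nAbove (Pt t) 0 2 = 32*t := by
    rw [nAbove_Pt, if_pos (by decide), if_neg (by decide), if_neg (by decide), if_neg (by decide)]; omega
  have h20 : nAbove (Pt t) 2 0 = 46*t := by
    rw [nAbove_Pt, if_neg (by decide), if_pos (by decide), if_pos (by decide), if_pos (by decide)]; omega
  have h03 : nAbove (Pt t) 0 3 = 34*t := by
    rw [nAbove_Pt, if_pos (by decide), if_neg (by decide), if_neg (by decide), if_pos (by decide)]; omega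
  have h30 : nAbove (Pt t) 3 0 = 44*t := by
    rw [nAbove_Pt, if_neg (by decide), if_pos (by decide), if_pos (by decide), if_neg (by decide)]; omega
  have h12 : nAbove (Pt t) 1 2 = 52*t := by
    rw [nAbove_Pt, if_pos (by decide), if_neg (by decide), if_pos (by decide), if_neg (by decide)]; omega
  have h21 : nAbove (Pt t) 2 1 = 26*t := by
    rw [nAbove_Pt, if_neg (by decide), if_pos (by decide), if_neg (by decide), if_pos (by decide)]; omega
  have h13 : nAbove (Pt t) 1 3 = 54*t := by
    rw [nAbove_Pt, if_pos (by decide), if_neg (by decide), if_pos (by decide), if_pos (by decide)]; omega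
  have h31 : nAbove (Pt t) 3 1 = 24*t := by
    rw [nAbove_Pt, if_neg (by decide), if_pos (by decide), if_neg (by decide), if_neg (by decide)]; omega
  have h23 : nAbove (Pt t) 2 3 = 78*t := by
    rw [nAbove_Pt, if_pos (by decide), if_pos (by decide), if_pos (by decide), if_pos (by decide)]; omega
  have h32 : nAbove (Pt t) 3 2 = 0 := by
    rw [nAbove_Pt, if_neg (by decide), if_neg (by decide), if_neg (by decide), if_neg (by decide)]
  have b01u := hup 0 1; have b01l := hlo 0 1
  have b10u := hup 1 0; have b10l := hlo 1 0
  have b02u := hup 0 2; have b02l := hlo 0 2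
  have b20u := hup 2 0; have b20l := hlo 2 0
  have b03u := hup 0 3; have b03l := hlo 0 3
  have b30u := hup 3 0; have b30l := hlo 3 0
  have b12u := hup 1 2; have b12l := hlo 1 2
  have b21u := hup 2 1; have b21l := hlo 2 1
  have b13u := hup 1 3; have b13l := hlo 1 3
  have b31u := hup 3 1; have b31l := hlo 3 1
  have b23u := hup 2 3; have b23l := hlo 2 3
  have b32u := hup 3 2; have b32l := hlo 3 2
  have hfilt0 : Finset.univ.filter (fun b : Fin 4 => b ≠ 0) = {1, 2, 3} := by decide
  have hfilt1 : Finset.univ.filter (fun b : Fin 4 => b ≠ 1) = {0, 2, 3} := by decide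
  have hfilt2 : Finset.univ.filter (fun b : Fin 4 => b ≠ 2) = {0, 1, 3} := by decide
  have hfilt3 : Finset.univ.filter (fun b : Fin 4 => b ≠ 3) = {0, 1, 2} := by decide
  have sq0 : ScQ R 0 = (adv R 1 0 + 1)/2 + ((adv R 2 0 + 1)/2 + (adv R 3 0 + 1)/2) := by
    unfold ScQ
    rw [hfilt0, Finset.sum_insert (by decide), Finset.sum_insert (by decide), Finset.sum_singleton]
  have sq1 : ScQ R 1 = (adv R 0 1 + 1)/2 + ((adv R 2 1 + 1)/2 + (adv R 3 1 + 1)/2) := by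
    unfold ScQ
    rw [hfilt1, Finset.sum_insert (by decide), Finset.sum_insert (by decide), Finset.sum_singleton]
  have sq2 : ScQ R 2 = (adv R 0 2 + 1)/2 + ((adv R 1 2 + 1)/2 + (adv R 3 2 + 1)/2) := by
    unfold ScQ
    rw [hfilt2, Finset.sum_insert (by decide), Finset.sum_insert (by decide), Finset.sum_singleton]
  have sq3 : ScQ R 3 = (adv R 0 3 + 1)/2 + ((adv R 1 3 + 1)/2 + (adv R 2 3 + 1)/2) := by
    unfold ScQ
    rw [hfilt3, Finset.sum_insert (by decide), Finset.sum_insert (by decide), Finset.sum_singleton]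
  simp only [adv] at sq0 sq1 sq2 sq3
  have part1 : ∀ y : Fin 4, y ≠ 0 → ScQ R 0 < ScQ R y := by
    intro y hy
    have h4 := y.isLt
    have h5 : (y:ℕ) ≠ 0 := fun h => hy (Fin.ext h)
    have h6 : (y:ℕ) = 1 ∨ (y:ℕ) = 2 ∨ (y:ℕ) = 3 := by omega
    have h7 : y = 1 ∨ y = 2 ∨ y = 3 := by
      rcases h6 with h6 | h6 | h6
      · exact Or.inl (Fin.ext h6)
      · exact Or.inr (Or.inl (Fin.ext h6))
      · exact Or.inr (Or.inr (Fin.ext h6))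
    rcases h7 with rfl | rfl | rfl <;> omega
  have part2 : ∀ y : Fin 4, y ≠ 2 → ScD R 2 < ScD R y := by
    intro y hy
    have h4 := y.isLt
    have h5 : (y:ℕ) ≠ 2 := fun h => hy (Fin.ext h)
    have h6 : (y:ℕ) = 0 ∨ (y:ℕ) = 1 ∨ (y:ℕ) = 3 := by omega
    have h7 : y = 0 ∨ y = 1 ∨ y = 3 := by
      rcases h6 with h6 | h6 | h6
      · exact Or.inl (Fin.ext h6)
      · exact Or.inr (Or.inl (Fin.ext h6))
      · exact Or.inr (Or.inr (Fin.ext h6))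
    rcases h7 with rfl | rfl | rfl <;> omega
  refine ⟨part1, part2, ?_⟩
  intro h
  have h0 : (0 : Fin 4) ∈ {y : Fin 4 | ∀ b, ScQ R y ≤ ScQ R b} := by
    intro b
    by_cases hb0 : b = 0
    · subst hb0; exact le_refl _
    · exact le_of_lt (part1 b hb0)
  rw [h] at h0
  have h02' := h0 2
  have h20' := part2 0 (by decide)
  omega
end

section
/- For every m ≥ 4, the proportion, among all voting situations with n agents on a set of m alternatives, of those in which the set of DQ winners differs from the set of Dodgson winners does not converge to 0 as n → ∞. (Equivalently, under the Impartial Anonymous Culture assumption, the probability that the DQ winner is a Dodgson winner does not converge to 1.) -/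
open Finset Filter

section Machinery

variable {m : ℕ}

def adjCnt (S : Multiset (Vote m)) (x y : Fin m) : ℕ :=
  (S.filter (fun v => (v y : ℕ) = (v x : ℕ) + 1)).card

def marg (S : Multiset (Vote m)) (x y : Fin m) : ℤ :=
  (snAbove S x y : ℤ) - (snAbove S y x : ℤ)

lemma snAbove_cons (v : Vote m) (S : Multiset (Vote m)) (x y : Fin m) :
    snAbove (v ::ₘ S) x y = (if v x < v y then 1 else 0) + snAbove S x y := by
  simp only [snAbove, Multiset.filter_cons]
  split_ifs <;> simp [Nat.add_comm]

lemma snAbove_erase {v : Vote m} {S : Multiset (Vote m)} (hv : v ∈ S) (x y : Fin m) :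
    snAbove S x y = (if v x < v y then 1 else 0) + snAbove (S.erase v) x y := by
  conv_lhs => rw [← Multiset.cons_erase hv]
  exact snAbove_cons ..

lemma adjCnt_cons (v : Vote m) (S : Multiset (Vote m)) (x y : Fin m) :
    adjCnt (v ::ₘ S) x y = (if (v y : ℕ) = (v x : ℕ) + 1 then 1 else 0) + adjCnt S x y := by
  simp only [adjCnt, Multiset.filter_cons]
  split_ifs <;> simp [Nat.add_comm]

lemma adjCnt_erase {v : Vote m} {S : Multiset (Vote m)} (hv : v ∈ S) (x y : Fin m) :
    adjCnt S x y = (if (v y : ℕ) = (v x : ℕ) + 1 then 1 else 0) + adjCnt (S.erase v) x y := by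
  conv_lhs => rw [← Multiset.cons_erase hv]
  exact adjCnt_cons ..

lemma swap_flip {v : Vote m} {p q : Fin m} (hq : (q : ℕ) = (p : ℕ) + 1)
    {x y : Fin m} (h1 : v x < v y)
    (h2 : ¬ (v.trans (Equiv.swap p q)) x < (v.trans (Equiv.swap p q)) y) :
    v x = p ∧ v y = q ∧ (v.trans (Equiv.swap p q)) x = q ∧ (v.trans (Equiv.swap p q)) y = p := by
  have hlt : (v x : ℕ) < (v y : ℕ) := Fin.lt_def.1 h1
  have h2' : ((Equiv.swap p q) (v y) : ℕ) ≤ ((Equiv.swap p q) (v x) : ℕ) := by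
    have := Fin.le_def.1 (not_lt.1 h2)
    simpa only [Equiv.trans_apply] using this
  have key : v x = p ∧ v y = q := by
    rw [Fin.ext_iff, Fin.ext_iff]
    simp only [Equiv.swap_apply_def] at h2'
    split_ifs at h2' <;> simp only [Fin.ext_iff] at * <;> omega
  obtain ⟨hx, hy⟩ := key
  refine ⟨hx, hy, ?_, ?_⟩
  · simp only [Equiv.trans_apply, hx, Equiv.swap_apply_left]
  · simp only [Equiv.trans_apply, hy, Equiv.swap_apply_right]

lemma marg_sAdjSwap {S S' : Multiset (Vote m)} (h : sAdjSwap S S') (x y : Fin m) :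
    marg S x y - 2 ≤ marg S' x y := by
  obtain ⟨v, hv, w, _, rfl⟩ := h
  have e1 := snAbove_erase hv x y
  have e2 := snAbove_erase hv y x
  have e3 := snAbove_cons w (S.erase v) x y
  have e4 := snAbove_cons w (S.erase v) y x
  simp only [marg]
  split_ifs at e1 e2 e3 e4 <;> omega

lemma reach_marg {k : ℕ} {S T : Multiset (Vote m)} (h : Reach sAdjSwap k S T) (x y : Fin m) :
    marg S x y - 2 * k ≤ marg T x y := by
  induction k generalizing S with
  | zero => have h' : S = T := h; subst h'; simp
  | succ k ih =>
    obtain ⟨R, h1, h2⟩ := h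
    have i1 := marg_sAdjSwap h1 x y
    have i2 := ih h2
    push_cast at *
    linarith

def phiP (S : Multiset (Vote m)) (a b : Fin m) : ℤ :=
  marg S b a + max 0 (marg S b a - 2 * (adjCnt S b a : ℤ))

lemma phi_case {M M' A A' : ℤ}
    (h : (M ≤ M' ∧ M - 2*A - 2 ≤ M' - 2*A') ∨ (M' = M - 2 ∧ M' - 2*A' = M - 2*A)) :
    M + max 0 (M - 2*A) - 2 ≤ M' + max 0 (M' - 2*A') := by
  rw [max_def, max_def]; split_ifs <;> omega

lemma phi_sAdjSwap (a b : Fin m) (hba : b ≠ a) {S S' : Multiset (Vote m)} (h : sAdjSwap S S') :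
    phiP S a b - 2 ≤ phiP S' a b := by
  obtain ⟨v, hv, w, hwv, rfl⟩ := h
  obtain ⟨p, q, hq, hwdef⟩ := hwv
  have e1 := snAbove_erase hv b a
  have e2 := snAbove_erase hv a b
  have e3 := snAbove_cons w (S.erase v) b a
  have e4 := snAbove_cons w (S.erase v) a b
  have a1 := adjCnt_erase hv b a
  have a2 := adjCnt_cons w (S.erase v) b a
  have hvne : v b ≠ v a := fun hh => hba (v.injective hh)
  have hwne : w b ≠ w a := fun hh => hba (w.injective hh)
  simp only [phiP, marg]
  rcases lt_or_gt_of_ne hvne with hvlt | hvgt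
  · rcases lt_or_gt_of_ne hwne with hwlt | hwgt
    · -- order of (b,a) unchanged (b above a in both)
      rw [if_pos hvlt] at e1; rw [if_neg (asymm hvlt)] at e2
      rw [if_pos hwlt] at e3; rw [if_neg (asymm hwlt)] at e4
      split_ifs at a1 a2 <;> (apply phi_case; left; constructor <;> omega)
    · -- flip : b moved below a
      subst hwdef
      obtain ⟨hvb, hva, hwb, hwa⟩ := swap_flip hq hvlt (not_lt.2 (le_of_lt hwgt))
      rw [if_pos hvlt] at e1; rw [if_neg (asymm hvlt)] at e2
      rw [if_neg (not_lt.2 (le_of_lt hwgt))] at e3; rw [if_pos hwgt] at e4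
      rw [if_pos (show ((v a : ℕ) = (v b : ℕ) + 1) by rw [hva, hvb]; exact hq)] at a1
      rw [if_neg (show ¬ (((v.trans (Equiv.swap p q)) a : ℕ) = ((v.trans (Equiv.swap p q)) b : ℕ) + 1) by
        rw [hwa, hwb]; omega)] at a2
      apply phi_case; right; constructor <;> omega
  · rcases lt_or_gt_of_ne hwne with hwlt | hwgt
    · -- flip up : b moved above a
      rw [if_neg (asymm hvgt)] at e1; rw [if_pos hvgt] at e2
      rw [if_pos hwlt] at e3; rw [if_neg (asymm hwlt)] at e4
      split_ifs at a1 a2 <;> (apply phi_case; left; constructor <;> omega)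
    · rw [if_neg (asymm hvgt)] at e1; rw [if_pos hvgt] at e2
      rw [if_neg (asymm hwgt)] at e3; rw [if_pos hwgt] at e4
      split_ifs at a1 a2 <;> (apply phi_case; left; constructor <;> omega)

lemma reach_phi (a b : Fin m) (hba : b ≠ a) {k : ℕ} {S T : Multiset (Vote m)}
    (h : Reach sAdjSwap k S T) : phiP S a b - 2 * k ≤ phiP T a b := by
  induction k generalizing S with
  | zero => have h' : S = T := h; subst h'; simp
  | succ k ih =>
    obtain ⟨R, h1, h2⟩ := h
    have i1 := phi_sAdjSwap a b hba h1
    have i2 := ih h2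
    push_cast at *
    linarith

lemma reach_zero_top (a : Fin m) :
    ∀ (N : ℕ) (S : Multiset (Vote m)), (S.map (fun v => (v a : ℕ))).sum ≤ N →
    ∃ k T, Reach sAdjSwap k S T ∧ ∀ v ∈ T, (v a : ℕ) = 0 := by
  intro N
  induction N with
  | zero =>
    intro S hS
    refine ⟨0, S, rfl, fun v hv => ?_⟩
    have : (v a : ℕ) ≤ 0 := by
      calc (v a : ℕ) ≤ (S.map (fun v => (v a : ℕ))).sum :=
        Multiset.le_sum_of_mem (Multiset.mem_map_of_mem (fun v => (v a : ℕ)) hv)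
      _ ≤ 0 := hS
    omega
  | succ N ih =>
    intro S hS
    by_cases hall : ∀ v ∈ S, (v a : ℕ) = 0
    · exact ⟨0, S, rfl, hall⟩
    · push_neg at hall
      obtain ⟨v, hv, hva⟩ := hall
      obtain ⟨E, rfl⟩ := Multiset.exists_cons_of_mem hv
      have hpos : 0 < (v a : ℕ) := Nat.pos_of_ne_zero hva
      have hplt : (v a : ℕ) - 1 < m := by have := (v a).isLt; omega
      set w := v.trans (Equiv.swap ⟨(v a : ℕ) - 1, hplt⟩ (v a)) with hw
      have hswap : AdjSwapVote v w := ⟨⟨(v a : ℕ) - 1, hplt⟩, v a, by simp; omega, rfl⟩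
      have hstep : sAdjSwap (v ::ₘ E) (w ::ₘ E) :=
        ⟨v, Multiset.mem_cons_self v E, w, hswap, by rw [Multiset.erase_cons_head]⟩
      have hwa : (w a : ℕ) = (v a : ℕ) - 1 := by
        rw [hw]; simp only [Equiv.trans_apply, Equiv.swap_apply_right]
      rw [Multiset.map_cons, Multiset.sum_cons] at hS
      obtain ⟨k, T, hRT, htop⟩ := ih (w ::ₘ E)
        (by rw [Multiset.map_cons, Multiset.sum_cons]; omega)
      exact ⟨k + 1, T, ⟨_, hstep, hRT⟩, htop⟩

lemma reach_tie (S : Multiset (Vote m)) (a : Fin m) :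
    {k | ∃ T, Reach sAdjSwap k S T ∧ sCondorcetTieWinner T a}.Nonempty := by
  obtain ⟨k, T, hR, htop⟩ := reach_zero_top a _ S le_rfl
  refine ⟨k, T, hR, fun b _ => ?_⟩
  have h0 : snAbove T b a = 0 := by
    rw [snAbove, Multiset.card_eq_zero, Multiset.filter_eq_nil]
    intro v hv hlt
    have h1 := htop v hv
    have h2 := Fin.lt_def.1 hlt
    omega
  simp [sadv, h0]

lemma sScD_lower (S : Multiset (Vote m)) (a b : Fin m) (hba : b ≠ a) :
    phiP S a b ≤ 2 * (sScD S a : ℤ) := by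
  have hne := reach_tie S a
  have hmem := Nat.sInf_mem hne
  obtain ⟨T, hRT, hTie⟩ := hmem
  have h1 : phiP S a b - 2 * (sScD S a : ℤ) ≤ phiP T a b := reach_phi a b hba hRT
  have h2 : marg T b a ≤ 0 := by
    have h3 := hTie b hba
    simp only [sadv] at h3
    have h4 : snAbove T b a ≤ snAbove T a b := Nat.sub_eq_zero_iff_le.1 h3
    simp only [marg]
    omega
  have h3 : phiP T a b ≤ 0 := by
    simp only [phiP]
    rw [max_def]; split_ifs <;> omega
  linarith

end Machinery
section KeyLemma

variable {m : ℕ}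

lemma flips (y z : Fin m) (hyz : y ≠ z) :
    ∀ (k : ℕ) (S : Multiset (Vote m)), k ≤ adjCnt S y z →
    ∃ T, Reach sAdjSwap k S T ∧
      (∀ x x' : Fin m, ¬(x = y ∧ x' = z) → ¬(x = z ∧ x' = y) → snAbove T x x' = snAbove S x x') ∧
      snAbove T y z + k = snAbove S y z ∧ snAbove T z y = snAbove S z y + k := by
  intro k
  induction k with
  | zero =>
    intro S _
    exact ⟨S, rfl, fun _ _ _ _ => rfl, by omega, by omega⟩
  | succ k ih =>
    intro S hk
    have hpos : 0 < adjCnt S y z := lt_of_lt_of_le (Nat.succ_pos k) hk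
    obtain ⟨v, hvmem⟩ := Multiset.card_pos_iff_exists_mem.1 hpos
    rw [Multiset.mem_filter] at hvmem
    obtain ⟨hv, hpred⟩ := hvmem
    obtain ⟨E, rfl⟩ := Multiset.exists_cons_of_mem hv
    have hq : ((v z : ℕ)) = ((v y : ℕ)) + 1 := hpred
    set w := v.trans (Equiv.swap (v y) (v z)) with hw
    have hswap : AdjSwapVote v w := ⟨v y, v z, hq, rfl⟩
    have hstep : sAdjSwap (v ::ₘ E) (w ::ₘ E) :=
      ⟨v, Multiset.mem_cons_self v E, w, hswap, by rw [Multiset.erase_cons_head]⟩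
    have hwy : w y = v z := by
      rw [hw]; simp only [Equiv.trans_apply, Equiv.swap_apply_left]
    have hwz : w z = v y := by
      rw [hw]; simp only [Equiv.trans_apply, Equiv.swap_apply_right]
    have hwother : ∀ x : Fin m, x ≠ y → x ≠ z → w x = v x := by
      intro x hxy hxz
      rw [hw]; simp only [Equiv.trans_apply]
      exact Equiv.swap_apply_of_ne_of_ne (fun h => hxy (v.injective h)) (fun h => hxz (v.injective h))
    -- the count of cheap votes decreased exactly by one
    have hA1 : adjCnt (v ::ₘ E) y z = 1 + adjCnt E y z := by
      rw [adjCnt_cons, if_pos hpred]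
    have hA2 : adjCnt (w ::ₘ E) y z = adjCnt E y z := by
      rw [adjCnt_cons, if_neg, Nat.zero_add]
      rw [hwy, hwz]; omega
    obtain ⟨T, hRT, hpres, hyzT, hzyT⟩ := ih (w ::ₘ E) (by omega)
    have hbit : ∀ x x' : Fin m, ¬(x = y ∧ x' = z) → ¬(x = z ∧ x' = y) →
        ((w x < w x') ↔ (v x < v x')) := by
      intro x x' hc1 hc2
      have hvals : ∀ u : Fin m, u ≠ y → u ≠ z →
          (v u : ℕ) ≠ (v y : ℕ) ∧ (v u : ℕ) ≠ (v z : ℕ) := by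
        intro u h1 h2
        exact ⟨fun h => h1 (v.injective (Fin.ext h)), fun h => h2 (v.injective (Fin.ext h))⟩
      by_cases hxy : x = y
      · subst hxy
        by_cases hxz : x' = z
        · exact absurd ⟨rfl, hxz⟩ hc1
        · by_cases hxy' : x' = x
          · subst hxy'; simp
          · have hne := hvals x' hxy' hxz
            rw [hwy, hwother x' hxy' hxz, Fin.lt_def, Fin.lt_def]
            omega
      · by_cases hxz : x = z
        · subst hxz
          by_cases hx'y : x' = y
          · exact absurd ⟨rfl, hx'y⟩ hc2
          · by_cases hx'z : x' = x
            · subst hx'z; simp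
            · have hne := hvals x' hx'y hx'z
              rw [hwz, hwother x' hx'y hx'z, Fin.lt_def, Fin.lt_def]
              omega
        · have hnex := hvals x hxy hxz
          by_cases hx'y : x' = y
          · subst hx'y
            rw [hwother x hxy hxz, hwy, Fin.lt_def, Fin.lt_def]; omega
          · by_cases hx'z : x' = z
            · subst hx'z
              rw [hwother x hxy hxz, hwz, Fin.lt_def, Fin.lt_def]; omega
            · rw [hwother x hxy hxz, hwother x' hx'y hx'z]
    refine ⟨T, ⟨w ::ₘ E, hstep, hRT⟩, ?_, ?_, ?_⟩
    · intro x x' hc1 hc2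
      rw [hpres x x' hc1 hc2, snAbove_cons, snAbove_cons,
        if_congr (hbit x x' hc1 hc2) rfl rfl]
    · have e1 : snAbove (w ::ₘ E) y z = (if w y < w z then 1 else 0) + snAbove E y z :=
        snAbove_cons ..
      have e2 : snAbove (v ::ₘ E) y z = (if v y < v z then 1 else 0) + snAbove E y z :=
        snAbove_cons ..
      rw [if_neg (by rw [hwy, hwz, Fin.lt_def]; omega)] at e1
      rw [if_pos (by rw [Fin.lt_def]; omega)] at e2
      omega
    · have e1 : snAbove (w ::ₘ E) z y = (if w z < w y then 1 else 0) + snAbove E z y :=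
        snAbove_cons ..
      have e2 : snAbove (v ::ₘ E) z y = (if v z < v y then 1 else 0) + snAbove E z y :=
        snAbove_cons ..
      rw [if_pos (by rw [hwy, hwz, Fin.lt_def]; omega)] at e1
      rw [if_neg (by rw [Fin.lt_def]; omega)] at e2
      omega

lemma sScD_le_flip (S : Multiset (Vote m)) (a c : Fin m) (hca : c ≠ a)
    (hcheap : (sadv S c a + 1) / 2 ≤ adjCnt S c a)
    (hothers : ∀ b, b ≠ a → b ≠ c → snAbove S b a ≤ snAbove S a b) :
    sScD S a ≤ (sadv S c a + 1) / 2 := by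
  obtain ⟨T, hR, hpres, hca', hac'⟩ := flips c a hca ((sadv S c a + 1) / 2) S hcheap
  apply Nat.sInf_le
  refine ⟨T, hR, fun b hb => ?_⟩
  rcases eq_or_ne b c with rfl | hbc
  · have hd : sadv S b a = snAbove S b a - snAbove S a b := rfl
    simp only [sadv]
    omega
  · have h1 : snAbove T b a = snAbove S b a :=
      hpres b a (fun h => hbc h.1) (fun h => hb h.1)
    have h2 : snAbove T a b = snAbove S a b :=
      hpres a b (fun h => hca h.1.symm) (fun h => hbc h.2)
    simp only [sadv, h1, h2]
    have := hothers b hb hbc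
    omega

lemma keyLemma (a b c : Fin m) (hab : a ≠ b) (hac : a ≠ c) (hbc : b ≠ c)
    (T : ℕ) (hT : 1 ≤ T) (S : Multiset (Vote m))
    (h1 : snAbove S a b + 15*T ≤ snAbove S b a)
    (h2 : snAbove S b a ≤ snAbove S a b + 17*T)
    (h3 : snAbove S b c + 23*T ≤ snAbove S c b)
    (h4 : snAbove S c b ≤ snAbove S b c + 25*T)
    (h5 : ∀ x, x ≠ a → x ≠ b → snAbove S x a + 22*T ≤ snAbove S a x)
    (h6 : ∀ x, x ≠ a → x ≠ b → x ≠ c → snAbove S x b ≤ snAbove S b x)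
    (h7 : adjCnt S b a ≤ T)
    (h8 : 112*T ≤ adjCnt S c b) :
    sQWinner S a ∧ ¬ sDWinner S a := by
  have hQa : sScQ S a ≤ 9 * T := by
    have hsum : sScQ S a = (sadv S b a + 1) / 2 := by
      rw [sScQ]
      rw [Finset.sum_eq_single_of_mem b
        (Finset.mem_filter.2 ⟨Finset.mem_univ b, hab.symm⟩)]
      intro x hx hxb
      have hxa : x ≠ a := (Finset.mem_filter.1 hx).2
      have := h5 x hxa hxb
      have hz : sadv S x a = 0 := by simp only [sadv]; omega
      simp [hz]
    rw [hsum]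
    have : sadv S b a ≤ 17 * T := by simp only [sadv]; omega
    omega
  have hQother : ∀ x, x ≠ a → 9 * T + 1 ≤ sScQ S x := by
    intro x hxa
    rcases eq_or_ne x b with rfl | hxb
    · -- use the deficit of b against c
      have hterm : (sadv S c x + 1) / 2 ≥ 11 * T := by
        have : 23 * T ≤ sadv S c x := by simp only [sadv]; omega
        omega
      have hle : (sadv S c x + 1) / 2 ≤ sScQ S x := by
        apply Finset.single_le_sum (f := fun y => (sadv S y x + 1) / 2)
          (fun i _ => Nat.zero_le _)
        exact Finset.mem_filter.2 ⟨Finset.mem_univ c, hbc.symm⟩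
      omega
    · have hterm : (sadv S a x + 1) / 2 ≥ 11 * T := by
        have := h5 x hxa hxb
        have : 22 * T ≤ sadv S a x := by simp only [sadv]; omega
        omega
      have hle : (sadv S a x + 1) / 2 ≤ sScQ S x := by
        apply Finset.single_le_sum (f := fun y => (sadv S y x + 1) / 2)
          (fun i _ => Nat.zero_le _)
        exact Finset.mem_filter.2 ⟨Finset.mem_univ a, hxa.symm⟩
      omega
  constructor
  · intro x
    rcases eq_or_ne x a with rfl | hxa
    · exact le_refl _
    · have := hQother x hxa
      omega
  · intro hD
    have hDb := hD b
    -- upper bound for b's Dodgson score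
    have hub : sScD S b ≤ (sadv S c b + 1) / 2 := by
      apply sScD_le_flip S b c hbc.symm
      · have : sadv S c b ≤ 25 * T := by simp only [sadv]; omega
        omega
      · intro x hxb hxc
        rcases eq_or_ne x a with rfl | hxa
        · omega
        · exact h6 x hxa hxb hxc
    have hub2 : sScD S b ≤ 13 * T := by
      have : sadv S c b ≤ 25 * T := by simp only [sadv]; omega
      omega
    -- lower bound for a's Dodgson score
    have hlb := sScD_lower S a b hab.symm
    have hphi : (28 : ℤ) * T ≤ phiP S a b := by
      have hm10 : (15 : ℤ) * T ≤ marg S b a := by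
        simp only [marg]; push_cast; omega
      have hA : (adjCnt S b a : ℤ) ≤ T := by exact_mod_cast h7
      simp only [phiP]
      have : (13 : ℤ) * T ≤ max 0 (marg S b a - 2 * (adjCnt S b a : ℤ)) := by
        rw [max_def]; split_ifs <;> omega
      omega
    have : (14 : ℤ) * T ≤ (sScD S a : ℤ) := by omega
    have : 14 * T ≤ sScD S a := by exact_mod_cast this
    omega

end KeyLemma
section Votes

variable {m : ℕ}

lemma ne_of_val_ne' {x y : Fin m} (h : (x : ℕ) ≠ (y : ℕ)) : x ≠ y :=
  fun hh => h (congrArg Fin.val hh)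

lemma swap_mk {i j k : ℕ} (hi : i < m) (hj : j < m) (hk : k < m) :
    Equiv.swap (⟨i, hi⟩ : Fin m) ⟨j, hj⟩ ⟨k, hk⟩
      = if k = i then ⟨j, hj⟩ else if k = j then ⟨i, hi⟩ else ⟨k, hk⟩ := by
  simp only [Equiv.swap_apply_def, Fin.mk.injEq]

def ia (hm : 4 ≤ m) : Fin m := ⟨0, by omega⟩
def ib (hm : 4 ≤ m) : Fin m := ⟨1, by omega⟩
def ic (hm : 4 ≤ m) : Fin m := ⟨2, by omega⟩
def id4 (hm : 4 ≤ m) : Fin m := ⟨3, by omega⟩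

/-- the vote (1,2,0,3,4,...) -/
def w1 (hm : 4 ≤ m) : Vote m := (Equiv.swap (ia hm) (ic hm)).trans (Equiv.swap (ia hm) (ib hm))
/-- the vote (2,1,3,0,4,...) -/
def w2 (hm : 4 ≤ m) : Vote m := (Equiv.swap (ia hm) (ic hm)).trans (Equiv.swap (ic hm) (id4 hm))
/-- the vote (0,2,1,3,4,...) -/
def w3 (hm : 4 ≤ m) : Vote m := Equiv.swap (ib hm) (ic hm)
/-- the vote (1,3,0,2,4,...) -/
def w5 (hm : 4 ≤ m) : Vote m :=
  ((Equiv.swap (ia hm) (ic hm)).trans (Equiv.swap (ia hm) (id4 hm))).trans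
    (Equiv.swap (ia hm) (ib hm))

lemma w1a (hm : 4 ≤ m) : (w1 hm (ia hm) : ℕ) = 2 := by
  simp [w1, ia, ib, ic, Equiv.trans_apply, swap_mk]
lemma w1b (hm : 4 ≤ m) : (w1 hm (ib hm) : ℕ) = 0 := by
  simp [w1, ia, ib, ic, Equiv.trans_apply, swap_mk]
lemma w1c (hm : 4 ≤ m) : (w1 hm (ic hm) : ℕ) = 1 := by
  simp [w1, ia, ib, ic, Equiv.trans_apply, swap_mk]
lemma w1d (hm : 4 ≤ m) : (w1 hm (id4 hm) : ℕ) = 3 := by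
  simp [w1, ia, ib, ic, id4, Equiv.trans_apply, swap_mk]

lemma w2a (hm : 4 ≤ m) : (w2 hm (ia hm) : ℕ) = 3 := by
  simp [w2, ia, ic, id4, Equiv.trans_apply, swap_mk]
lemma w2b (hm : 4 ≤ m) : (w2 hm (ib hm) : ℕ) = 1 := by
  simp [w2, ia, ib, ic, id4, Equiv.trans_apply, swap_mk]
lemma w2c (hm : 4 ≤ m) : (w2 hm (ic hm) : ℕ) = 0 := by
  simp [w2, ia, ic, id4, Equiv.trans_apply, swap_mk]
lemma w2d (hm : 4 ≤ m) : (w2 hm (id4 hm) : ℕ) = 2 := by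
  simp [w2, ia, ic, id4, Equiv.trans_apply, swap_mk]

lemma w3a (hm : 4 ≤ m) : (w3 hm (ia hm) : ℕ) = 0 := by
  simp [w3, ia, ib, ic, swap_mk]
lemma w3b (hm : 4 ≤ m) : (w3 hm (ib hm) : ℕ) = 2 := by
  simp [w3, ib, ic, swap_mk]
lemma w3c (hm : 4 ≤ m) : (w3 hm (ic hm) : ℕ) = 1 := by
  simp [w3, ib, ic, swap_mk]
lemma w3d (hm : 4 ≤ m) : (w3 hm (id4 hm) : ℕ) = 3 := by
  simp [w3, ib, ic, id4, swap_mk]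

lemma w5a (hm : 4 ≤ m) : (w5 hm (ia hm) : ℕ) = 2 := by
  simp [w5, ia, ib, ic, id4, Equiv.trans_apply, swap_mk]
lemma w5b (hm : 4 ≤ m) : (w5 hm (ib hm) : ℕ) = 0 := by
  simp [w5, ia, ib, ic, id4, Equiv.trans_apply, swap_mk]
lemma w5c (hm : 4 ≤ m) : (w5 hm (ic hm) : ℕ) = 3 := by
  simp [w5, ia, ib, ic, id4, Equiv.trans_apply, swap_mk]
lemma w5d (hm : 4 ≤ m) : (w5 hm (id4 hm) : ℕ) = 1 := by
  simp [w5, ia, ib, ic, id4, Equiv.trans_apply, swap_mk]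

lemma w1o (hm : 4 ≤ m) {x : Fin m} (hx : 4 ≤ (x : ℕ)) : (w1 hm x : ℕ) = (x : ℕ) := by
  have h0 : x ≠ ia hm := ne_of_val_ne' (by simp [ia]; omega)
  have h1 : x ≠ ib hm := ne_of_val_ne' (by simp [ib]; omega)
  have h2 : x ≠ ic hm := ne_of_val_ne' (by simp [ic]; omega)
  rw [w1, Equiv.trans_apply, Equiv.swap_apply_of_ne_of_ne h0 h2,
    Equiv.swap_apply_of_ne_of_ne h0 h1]
lemma w2o (hm : 4 ≤ m) {x : Fin m} (hx : 4 ≤ (x : ℕ)) : (w2 hm x : ℕ) = (x : ℕ) := by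
  have h0 : x ≠ ia hm := ne_of_val_ne' (by simp [ia]; omega)
  have h2 : x ≠ ic hm := ne_of_val_ne' (by simp [ic]; omega)
  have h3 : x ≠ id4 hm := ne_of_val_ne' (by simp [id4]; omega)
  rw [w2, Equiv.trans_apply, Equiv.swap_apply_of_ne_of_ne h0 h2,
    Equiv.swap_apply_of_ne_of_ne h2 h3]
lemma w3o (hm : 4 ≤ m) {x : Fin m} (hx : 4 ≤ (x : ℕ)) : (w3 hm x : ℕ) = (x : ℕ) := by
  have h1 : x ≠ ib hm := ne_of_val_ne' (by simp [ib]; omega)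
  have h2 : x ≠ ic hm := ne_of_val_ne' (by simp [ic]; omega)
  rw [w3, Equiv.swap_apply_of_ne_of_ne h1 h2]
lemma w5o (hm : 4 ≤ m) {x : Fin m} (hx : 4 ≤ (x : ℕ)) : (w5 hm x : ℕ) = (x : ℕ) := by
  have h0 : x ≠ ia hm := ne_of_val_ne' (by simp [ia]; omega)
  have h1 : x ≠ ib hm := ne_of_val_ne' (by simp [ib]; omega)
  have h2 : x ≠ ic hm := ne_of_val_ne' (by simp [ic]; omega)
  have h3 : x ≠ id4 hm := ne_of_val_ne' (by simp [id4]; omega)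
  rw [w5, Equiv.trans_apply, Equiv.trans_apply,
    Equiv.swap_apply_of_ne_of_ne h0 h2, Equiv.swap_apply_of_ne_of_ne h0 h3,
    Equiv.swap_apply_of_ne_of_ne h0 h1]

lemma vne12 (hm : 4 ≤ m) : w1 hm ≠ w2 hm := by
  intro h
  have : (w1 hm (ia hm) : ℕ) = (w2 hm (ia hm) : ℕ) := by rw [h]
  rw [w1a, w2a] at this; omega
lemma vne13 (hm : 4 ≤ m) : w1 hm ≠ w3 hm := by
  intro h
  have : (w1 hm (ia hm) : ℕ) = (w3 hm (ia hm) : ℕ) := by rw [h]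
  rw [w1a, w3a] at this; omega
lemma vne15 (hm : 4 ≤ m) : w1 hm ≠ w5 hm := by
  intro h
  have : (w1 hm (ic hm) : ℕ) = (w5 hm (ic hm) : ℕ) := by rw [h]
  rw [w1c, w5c] at this; omega
lemma vne23 (hm : 4 ≤ m) : w2 hm ≠ w3 hm := by
  intro h
  have : (w2 hm (ia hm) : ℕ) = (w3 hm (ia hm) : ℕ) := by rw [h]
  rw [w2a, w3a] at this; omega
lemma vne25 (hm : 4 ≤ m) : w2 hm ≠ w5 hm := by
  intro h
  have : (w2 hm (ia hm) : ℕ) = (w5 hm (ia hm) : ℕ) := by rw [h]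
  rw [w2a, w5a] at this; omega
lemma vne35 (hm : 4 ≤ m) : w3 hm ≠ w5 hm := by
  intro h
  have : (w3 hm (ia hm) : ℕ) = (w5 hm (ia hm) : ℕ) := by rw [h]
  rw [w3a, w5a] at this; omega

end Votes
section Counting

variable {m : ℕ}

lemma cardFilterRep (p : Vote m → Prop) [DecidablePred p] (k : ℕ) (v : Vote m) :
    ((Multiset.replicate k v).filter p).card = if p v then k else 0 := by
  split_ifs with h
  · rw [Multiset.filter_eq_self.2
      (fun x hx => by rw [Multiset.eq_of_mem_replicate hx]; exact h), Multiset.card_replicate]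
  · rw [Multiset.filter_eq_nil.2
      (fun x hx hpx => h (by rwa [Multiset.eq_of_mem_replicate hx] at hpx)), Multiset.card_zero]

lemma cardFilterSum {ι : Type*} (p : Vote m → Prop) [DecidablePred p]
    (s : Finset ι) (f : ι → Multiset (Vote m)) :
    ((∑ w ∈ s, f w).filter p).card = ∑ w ∈ s, ((f w).filter p).card := by
  classical
  induction s using Finset.cons_induction with
  | empty => simp
  | cons a s ha ih =>
    rw [Finset.sum_cons, Finset.sum_cons, Multiset.filter_add, Multiset.card_add, ih]

lemma cardSum {ι : Type*} (s : Finset ι) (f : ι → Multiset (Vote m)) :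
    Multiset.card (∑ w ∈ s, f w) = ∑ w ∈ s, Multiset.card (f w) := by
  classical
  induction s using Finset.cons_induction with
  | empty => simp
  | cons a s ha ih => rw [Finset.sum_cons, Finset.sum_cons, Multiset.card_add, ih]

def baseF (hm : 4 ≤ m) (Tn : ℕ) : Vote m → ℕ := fun w =>
  if w = w2 hm then 20*Tn else if w = w3 hm then 92*Tn else if w = w5 hm then 24*Tn else 0

def ggF (hm : 4 ≤ m) {L : ℕ} (g : {w : Vote m // w ≠ w1 hm} → Fin L) : Vote m → ℕ :=
  fun w => if h : w = w1 hm then 0 else (g ⟨w, h⟩ : ℕ)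

def othersF (hm : 4 ≤ m) : Finset (Vote m) := Finset.univ.erase (w1 hm)

def SGF (hm : 4 ≤ m) (n Tn : ℕ) {L : ℕ} (g : {w : Vote m // w ≠ w1 hm} → Fin L) :
    Multiset (Vote m) :=
  Multiset.replicate (n - ∑ w ∈ othersF hm, (baseF hm Tn w + ggF hm g w)) (w1 hm)
    + ∑ w ∈ othersF hm, Multiset.replicate (baseF hm Tn w + ggF hm g w) w

lemma mem_others (hm : 4 ≤ m) {w : Vote m} (hw : w ≠ w1 hm) : w ∈ othersF hm :=
  Finset.mem_erase.2 ⟨hw, Finset.mem_univ w⟩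

lemma base_ite_sum (hm : 4 ≤ m) (Tn : ℕ) (p : Vote m → Prop) [DecidablePred p] :
    ∑ w ∈ othersF hm, (if p w then baseF hm Tn w else 0)
      = (if p (w2 hm) then 20*Tn else 0) + (if p (w3 hm) then 92*Tn else 0)
        + (if p (w5 hm) then 24*Tn else 0) := by
  classical
  have hsub : ({w2 hm, w3 hm, w5 hm} : Finset (Vote m)) ⊆ othersF hm := by
    intro w hw
    simp only [Finset.mem_insert, Finset.mem_singleton] at hw
    rcases hw with rfl | rfl | rfl
    · exact mem_others hm (Ne.symm (vne12 hm))
    · exact mem_others hm (Ne.symm (vne13 hm))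
    · exact mem_others hm (Ne.symm (vne15 hm))
  rw [← Finset.sum_subset hsub]
  · have h23 : w2 hm ∉ ({w3 hm, w5 hm} : Finset (Vote m)) := by
      simp [vne23 hm, vne25 hm]
    have h35 : w3 hm ∉ ({w5 hm} : Finset (Vote m)) := by simp [vne35 hm]
    have e2 : baseF hm Tn (w2 hm) = 20*Tn := by simp [baseF]
    have e3 : baseF hm Tn (w3 hm) = 92*Tn := by simp [baseF, (vne23 hm).symm]
    have e5 : baseF hm Tn (w5 hm) = 24*Tn := by
      simp [baseF, (vne25 hm).symm, (vne35 hm).symm]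
    rw [Finset.sum_insert h23, Finset.sum_insert h35, Finset.sum_singleton, e2, e3, e5, add_assoc]
  · intro x hx hnx
    simp only [Finset.mem_insert, Finset.mem_singleton, not_or] at hnx
    have hb : baseF hm Tn x = 0 := by simp [baseF, hnx.1, hnx.2.1, hnx.2.2]
    rw [hb]; simp

lemma base_sum (hm : 4 ≤ m) (Tn : ℕ) :
    ∑ w ∈ othersF hm, baseF hm Tn w = 136*Tn := by
  have h := base_ite_sum hm Tn (fun _ => True)
  simp only [if_true] at h
  rw [h]; ring

lemma gg_le (hm : 4 ≤ m) {L : ℕ} (g : {w : Vote m // w ≠ w1 hm} → Fin L) (w : Vote m) :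
    ggF hm g w ≤ L := by
  rw [ggF]
  split
  · exact Nat.zero_le L
  · exact le_of_lt (Fin.is_lt _)

lemma gg_sum_le (hm : 4 ≤ m) {L : ℕ} (g : {w : Vote m // w ≠ w1 hm} → Fin L) :
    ∑ w ∈ othersF hm, ggF hm g w ≤ m.factorial * L := by
  calc ∑ w ∈ othersF hm, ggF hm g w ≤ ∑ _w ∈ othersF hm, L :=
        Finset.sum_le_sum (fun w _ => gg_le hm g w)
    _ = (othersF hm).card * L := by rw [Finset.sum_const, smul_eq_mul]
    _ ≤ m.factorial * L := by
        apply Nat.mul_le_mul_right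
        calc (othersF hm).card ≤ Finset.univ.card := Finset.card_erase_le
          _ = m.factorial := by
              rw [Finset.card_univ, Fintype.card_perm, Fintype.card_fin]

lemma cnt_eval (hm : 4 ≤ m) (n Tn : ℕ) {L : ℕ} (g : {w : Vote m // w ≠ w1 hm} → Fin L)
    (p : Vote m → Prop) [DecidablePred p] :
    ∃ R ≤ m.factorial * L,
      ((SGF hm n Tn g).filter p).card
        = (if p (w1 hm) then n - (136*Tn + ∑ w ∈ othersF hm, ggF hm g w) else 0)
          + ((if p (w2 hm) then 20*Tn else 0) + (if p (w3 hm) then 92*Tn else 0)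
          + (if p (w5 hm) then 24*Tn else 0) + R) := by
  classical
  refine ⟨∑ w ∈ othersF hm, (if p w then ggF hm g w else 0), ?_, ?_⟩
  · calc ∑ w ∈ othersF hm, (if p w then ggF hm g w else 0)
        ≤ ∑ w ∈ othersF hm, ggF hm g w := by
          apply Finset.sum_le_sum
          intro w _
          split_ifs
          · exact le_rfl
          · exact Nat.zero_le _
      _ ≤ m.factorial * L := gg_sum_le hm g
  · rw [SGF, Multiset.filter_add, Multiset.card_add, cardFilterRep, cardFilterSum]
    have hrep : ∑ w ∈ othersF hm, (baseF hm Tn w + ggF hm g w)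
        = 136*Tn + ∑ w ∈ othersF hm, ggF hm g w := by
      rw [Finset.sum_add_distrib, base_sum]
    have hterm : ∀ w ∈ othersF hm,
        ((Multiset.replicate (baseF hm Tn w + ggF hm g w) w).filter p).card
          = (if p w then baseF hm Tn w else 0) + (if p w then ggF hm g w else 0) := by
      intro w _
      rw [cardFilterRep]
      split_ifs <;> simp
    have hsplit : ∑ w ∈ othersF hm,
        ((if p w then baseF hm Tn w else 0) + (if p w then ggF hm g w else 0))
        = (∑ w ∈ othersF hm, (if p w then baseF hm Tn w else 0))
          + ∑ w ∈ othersF hm, (if p w then ggF hm g w else 0) := Finset.sum_add_distrib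
    rw [hrep, Finset.sum_congr rfl hterm, hsplit, base_ite_sum]

lemma SGF_card (hm : 4 ≤ m) (n Tn : ℕ) {L : ℕ} (g : {w : Vote m // w ≠ w1 hm} → Fin L)
    (hle : 136*Tn + ∑ w ∈ othersF hm, ggF hm g w ≤ n) :
    Multiset.card (SGF hm n Tn g) = n := by
  have hrep : ∑ w ∈ othersF hm, (baseF hm Tn w + ggF hm g w)
      = 136*Tn + ∑ w ∈ othersF hm, ggF hm g w := by
    rw [Finset.sum_add_distrib, base_sum]
  rw [SGF, Multiset.card_add, Multiset.card_replicate, cardSum]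
  have hterm : ∀ w ∈ othersF hm,
      Multiset.card (Multiset.replicate (baseF hm Tn w + ggF hm g w) w)
        = baseF hm Tn w + ggF hm g w := fun w _ => Multiset.card_replicate ..
  rw [Finset.sum_congr rfl hterm, hrep]
  omega

lemma SGF_count (hm : 4 ≤ m) (n Tn : ℕ) {L : ℕ} (g : {w : Vote m // w ≠ w1 hm} → Fin L)
    {w : Vote m} (hw : w ≠ w1 hm) :
    Multiset.count w (SGF hm n Tn g) = baseF hm Tn w + ggF hm g w := by
  classical
  rw [SGF, Multiset.count_add, Multiset.count_replicate, if_neg (Ne.symm hw),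
    Multiset.count_sum']
  have hterm : ∀ w' ∈ othersF hm,
      Multiset.count w (Multiset.replicate (baseF hm Tn w' + ggF hm g w') w')
        = if w' = w then baseF hm Tn w' + ggF hm g w' else 0 := by
    intro w' _
    rw [Multiset.count_replicate]
  rw [Finset.sum_congr rfl hterm, Finset.sum_ite_eq' (othersF hm) w
    (fun w' => baseF hm Tn w' + ggF hm g w'), if_pos (mem_others hm hw), Nat.zero_add]

end Counting
section Final

variable {m : ℕ}

lemma snAbove_SGF (hm : 4 ≤ m) (n Tn : ℕ) {L : ℕ} (g : {w : Vote m // w ≠ w1 hm} → Fin L)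
    (x y : Fin m) :
    ∃ R ≤ m.factorial * L, snAbove (SGF hm n Tn g) x y
      = (if w1 hm x < w1 hm y then n - (136*Tn + ∑ w ∈ othersF hm, ggF hm g w) else 0)
        + ((if w2 hm x < w2 hm y then 20*Tn else 0) + (if w3 hm x < w3 hm y then 92*Tn else 0)
        + (if w5 hm x < w5 hm y then 24*Tn else 0) + R) := by
  obtain ⟨R, hR, h⟩ := cnt_eval hm n Tn g (fun v => v x < v y)
  refine ⟨R, hR, ?_⟩
  simp only [snAbove]
  exact h

lemma adjCnt_SGF (hm : 4 ≤ m) (n Tn : ℕ) {L : ℕ} (g : {w : Vote m // w ≠ w1 hm} → Fin L)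
    (x y : Fin m) :
    ∃ R ≤ m.factorial * L, adjCnt (SGF hm n Tn g) x y
      = (if (w1 hm y : ℕ) = (w1 hm x : ℕ) + 1 then n - (136*Tn + ∑ w ∈ othersF hm, ggF hm g w) else 0)
        + ((if (w2 hm y : ℕ) = (w2 hm x : ℕ) + 1 then 20*Tn else 0)
        + (if (w3 hm y : ℕ) = (w3 hm x : ℕ) + 1 then 92*Tn else 0)
        + (if (w5 hm y : ℕ) = (w5 hm x : ℕ) + 1 then 24*Tn else 0) + R) := by
  obtain ⟨R, hR, h⟩ := cnt_eval hm n Tn g (fun v => (v y : ℕ) = (v x : ℕ) + 1)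
  refine ⟨R, hR, ?_⟩
  simp only [adjCnt]
  exact h

lemma hGoodLemma (hm : 4 ≤ m) (n : ℕ)
    (hn : 500 * (m.factorial * m.factorial) + 1000000 ≤ n)
    {L : ℕ} (hL : L = (n / 200) / (m.factorial * m.factorial))
    (g : {w : Vote m // w ≠ w1 hm} → Fin L) :
    sQWinner (SGF hm n (n / 200) g) (ia hm) ∧ ¬ sDWinner (SGF hm n (n / 200) g) (ia hm) := by
  have hK24 : 24 ≤ m.factorial := by
    have h := Nat.factorial_le hm
    have h4 : Nat.factorial 4 = 24 := rfl
    omega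
  have hKK : m.factorial ≤ m.factorial * m.factorial :=
    Nat.le_mul_of_pos_left m.factorial (by omega)
  have hTle : 200 * (n / 200) ≤ n := by
    have := Nat.div_mul_le_self n 200
    omega
  have hmod := Nat.div_add_mod n 200
  have hmodlt : n % 200 < 200 := Nat.mod_lt _ (by norm_num)
  have hTbig : 5000 ≤ n / 200 := by
    have h6 : 1000000 ≤ n := by omega
    omega
  have hKKL : L * (m.factorial * m.factorial) ≤ n / 200 := by
    rw [hL]; exact Nat.div_mul_le_self _ _
  have hKL : 24 * (m.factorial * L) ≤ n / 200 := by
    have h1 : 24 * (m.factorial * L) ≤ m.factorial * (m.factorial * L) :=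
      Nat.mul_le_mul_right _ hK24
    have h2 : m.factorial * (m.factorial * L) = L * (m.factorial * m.factorial) := by ring
    omega
  have hUle : ∑ w ∈ othersF hm, ggF hm g w ≤ m.factorial * L := gg_sum_le hm g
  have hab : ia hm ≠ ib hm := ne_of_val_ne' (by simp [ia, ib])
  have hac : ia hm ≠ ic hm := ne_of_val_ne' (by simp [ia, ic])
  have hbc : ib hm ≠ ic hm := ne_of_val_ne' (by simp [ib, ic])
  refine keyLemma (ia hm) (ib hm) (ic hm) hab hac hbc (n / 200) (by omega) (SGF hm n (n / 200) g)
    ?_ ?_ ?_ ?_ ?_ ?_ ?_ ?_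
  · -- h1
    obtain ⟨R1, hR1, eR1⟩ := snAbove_SGF hm n (n / 200) g (ia hm) (ib hm)
    rw [if_neg (by rw [Fin.lt_def, w1a hm, w1b hm]; omega),
      if_neg (by rw [Fin.lt_def, w2a hm, w2b hm]; omega),
      if_pos (by rw [Fin.lt_def, w3a hm, w3b hm]; omega),
      if_neg (by rw [Fin.lt_def, w5a hm, w5b hm]; omega)] at eR1
    obtain ⟨R2, hR2, eR2⟩ := snAbove_SGF hm n (n / 200) g (ib hm) (ia hm)
    rw [if_pos (by rw [Fin.lt_def, w1b hm, w1a hm]; omega),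
      if_pos (by rw [Fin.lt_def, w2b hm, w2a hm]; omega),
      if_neg (by rw [Fin.lt_def, w3b hm, w3a hm]; omega),
      if_pos (by rw [Fin.lt_def, w5b hm, w5a hm]; omega)] at eR2
    omega
  · -- h2
    obtain ⟨R1, hR1, eR1⟩ := snAbove_SGF hm n (n / 200) g (ia hm) (ib hm)
    rw [if_neg (by rw [Fin.lt_def, w1a hm, w1b hm]; omega),
      if_neg (by rw [Fin.lt_def, w2a hm, w2b hm]; omega),
      if_pos (by rw [Fin.lt_def, w3a hm, w3b hm]; omega),
      if_neg (by rw [Fin.lt_def, w5a hm, w5b hm]; omega)] at eR1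
    obtain ⟨R2, hR2, eR2⟩ := snAbove_SGF hm n (n / 200) g (ib hm) (ia hm)
    rw [if_pos (by rw [Fin.lt_def, w1b hm, w1a hm]; omega),
      if_pos (by rw [Fin.lt_def, w2b hm, w2a hm]; omega),
      if_neg (by rw [Fin.lt_def, w3b hm, w3a hm]; omega),
      if_pos (by rw [Fin.lt_def, w5b hm, w5a hm]; omega)] at eR2
    omega
  · -- h3
    obtain ⟨R1, hR1, eR1⟩ := snAbove_SGF hm n (n / 200) g (ib hm) (ic hm)
    rw [if_pos (by rw [Fin.lt_def, w1b hm, w1c hm]; omega),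
      if_neg (by rw [Fin.lt_def, w2b hm, w2c hm]; omega),
      if_neg (by rw [Fin.lt_def, w3b hm, w3c hm]; omega),
      if_pos (by rw [Fin.lt_def, w5b hm, w5c hm]; omega)] at eR1
    obtain ⟨R2, hR2, eR2⟩ := snAbove_SGF hm n (n / 200) g (ic hm) (ib hm)
    rw [if_neg (by rw [Fin.lt_def, w1c hm, w1b hm]; omega),
      if_pos (by rw [Fin.lt_def, w2c hm, w2b hm]; omega),
      if_pos (by rw [Fin.lt_def, w3c hm, w3b hm]; omega),
      if_neg (by rw [Fin.lt_def, w5c hm, w5b hm]; omega)] at eR2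
    omega
  · -- h4
    obtain ⟨R1, hR1, eR1⟩ := snAbove_SGF hm n (n / 200) g (ib hm) (ic hm)
    rw [if_pos (by rw [Fin.lt_def, w1b hm, w1c hm]; omega),
      if_neg (by rw [Fin.lt_def, w2b hm, w2c hm]; omega),
      if_neg (by rw [Fin.lt_def, w3b hm, w3c hm]; omega),
      if_pos (by rw [Fin.lt_def, w5b hm, w5c hm]; omega)] at eR1
    obtain ⟨R2, hR2, eR2⟩ := snAbove_SGF hm n (n / 200) g (ic hm) (ib hm)
    rw [if_neg (by rw [Fin.lt_def, w1c hm, w1b hm]; omega),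
      if_pos (by rw [Fin.lt_def, w2c hm, w2b hm]; omega),
      if_pos (by rw [Fin.lt_def, w3c hm, w3b hm]; omega),
      if_neg (by rw [Fin.lt_def, w5c hm, w5b hm]; omega)] at eR2
    omega
  · -- h5
    intro x hxa hxb
    by_cases hxc : x = ic hm
    · subst hxc
      obtain ⟨R1, hR1, eR1⟩ := snAbove_SGF hm n (n / 200) g (ic hm) (ia hm)
      rw [if_pos (by rw [Fin.lt_def, w1c hm, w1a hm]; omega),
        if_pos (by rw [Fin.lt_def, w2c hm, w2a hm]; omega),
        if_neg (by rw [Fin.lt_def, w3c hm, w3a hm]; omega),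
        if_neg (by rw [Fin.lt_def, w5c hm, w5a hm]; omega)] at eR1
      obtain ⟨R2, hR2, eR2⟩ := snAbove_SGF hm n (n / 200) g (ia hm) (ic hm)
      rw [if_neg (by rw [Fin.lt_def, w1a hm, w1c hm]; omega),
        if_neg (by rw [Fin.lt_def, w2a hm, w2c hm]; omega),
        if_pos (by rw [Fin.lt_def, w3a hm, w3c hm]; omega),
        if_pos (by rw [Fin.lt_def, w5a hm, w5c hm]; omega)] at eR2
      omega
    by_cases hxd : x = id4 hm
    · subst hxd
      obtain ⟨R1, hR1, eR1⟩ := snAbove_SGF hm n (n / 200) g (id4 hm) (ia hm)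
      rw [if_neg (by rw [Fin.lt_def, w1d hm, w1a hm]; omega),
        if_pos (by rw [Fin.lt_def, w2d hm, w2a hm]; omega),
        if_neg (by rw [Fin.lt_def, w3d hm, w3a hm]; omega),
        if_pos (by rw [Fin.lt_def, w5d hm, w5a hm]; omega)] at eR1
      obtain ⟨R2, hR2, eR2⟩ := snAbove_SGF hm n (n / 200) g (ia hm) (id4 hm)
      rw [if_pos (by rw [Fin.lt_def, w1a hm, w1d hm]; omega),
        if_neg (by rw [Fin.lt_def, w2a hm, w2d hm]; omega),
        if_pos (by rw [Fin.lt_def, w3a hm, w3d hm]; omega),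
        if_neg (by rw [Fin.lt_def, w5a hm, w5d hm]; omega)] at eR2
      omega
    have hx4 : 4 ≤ (x : ℕ) := by
      by_contra hlt
      push_neg at hlt
      have hx : (x:ℕ) = 0 ∨ (x:ℕ) = 1 ∨ (x:ℕ) = 2 ∨ (x:ℕ) = 3 := by omega
      rcases hx with h|h|h|h
      · exact hxa (Fin.ext h)
      · exact hxb (Fin.ext h)
      · exact hxc (Fin.ext h)
      · exact hxd (Fin.ext h)
    obtain ⟨R1, hR1, eR1⟩ := snAbove_SGF hm n (n / 200) g x (ia hm)
    rw [if_neg (by rw [Fin.lt_def, w1o hm hx4, w1a hm]; omega),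
      if_neg (by rw [Fin.lt_def, w2o hm hx4, w2a hm]; omega),
      if_neg (by rw [Fin.lt_def, w3o hm hx4, w3a hm]; omega),
      if_neg (by rw [Fin.lt_def, w5o hm hx4, w5a hm]; omega)] at eR1
    obtain ⟨R2, hR2, eR2⟩ := snAbove_SGF hm n (n / 200) g (ia hm) x
    rw [if_pos (by rw [Fin.lt_def, w1a hm, w1o hm hx4]; omega),
      if_pos (by rw [Fin.lt_def, w2a hm, w2o hm hx4]; omega),
      if_pos (by rw [Fin.lt_def, w3a hm, w3o hm hx4]; omega),
      if_pos (by rw [Fin.lt_def, w5a hm, w5o hm hx4]; omega)] at eR2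
    omega
  · -- h6
    intro x hxa hxb hxc
    by_cases hxd : x = id4 hm
    · subst hxd
      obtain ⟨R1, hR1, eR1⟩ := snAbove_SGF hm n (n / 200) g (id4 hm) (ib hm)
      rw [if_neg (by rw [Fin.lt_def, w1d hm, w1b hm]; omega),
        if_neg (by rw [Fin.lt_def, w2d hm, w2b hm]; omega),
        if_neg (by rw [Fin.lt_def, w3d hm, w3b hm]; omega),
        if_neg (by rw [Fin.lt_def, w5d hm, w5b hm]; omega)] at eR1
      obtain ⟨R2, hR2, eR2⟩ := snAbove_SGF hm n (n / 200) g (ib hm) (id4 hm)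
      rw [if_pos (by rw [Fin.lt_def, w1b hm, w1d hm]; omega),
        if_pos (by rw [Fin.lt_def, w2b hm, w2d hm]; omega),
        if_pos (by rw [Fin.lt_def, w3b hm, w3d hm]; omega),
        if_pos (by rw [Fin.lt_def, w5b hm, w5d hm]; omega)] at eR2
      omega
    have hx4 : 4 ≤ (x : ℕ) := by
      by_contra hlt
      push_neg at hlt
      have hx : (x:ℕ) = 0 ∨ (x:ℕ) = 1 ∨ (x:ℕ) = 2 ∨ (x:ℕ) = 3 := by omega
      rcases hx with h|h|h|h
      · exact hxa (Fin.ext h)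
      · exact hxb (Fin.ext h)
      · exact hxc (Fin.ext h)
      · exact hxd (Fin.ext h)
    obtain ⟨R1, hR1, eR1⟩ := snAbove_SGF hm n (n / 200) g x (ib hm)
    rw [if_neg (by rw [Fin.lt_def, w1o hm hx4, w1b hm]; omega),
      if_neg (by rw [Fin.lt_def, w2o hm hx4, w2b hm]; omega),
      if_neg (by rw [Fin.lt_def, w3o hm hx4, w3b hm]; omega),
      if_neg (by rw [Fin.lt_def, w5o hm hx4, w5b hm]; omega)] at eR1
    obtain ⟨R2, hR2, eR2⟩ := snAbove_SGF hm n (n / 200) g (ib hm) x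
    rw [if_pos (by rw [Fin.lt_def, w1b hm, w1o hm hx4]; omega),
      if_pos (by rw [Fin.lt_def, w2b hm, w2o hm hx4]; omega),
      if_pos (by rw [Fin.lt_def, w3b hm, w3o hm hx4]; omega),
      if_pos (by rw [Fin.lt_def, w5b hm, w5o hm hx4]; omega)] at eR2
    omega
  · -- h7
    obtain ⟨R1, hR1, eR1⟩ := adjCnt_SGF hm n (n / 200) g (ib hm) (ia hm)
    rw [if_neg (by rw [w1a hm, w1b hm] <;> omega),
      if_neg (by rw [w2a hm, w2b hm] <;> omega),
      if_neg (by rw [w3a hm, w3b hm] <;> omega),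
      if_neg (by rw [w5a hm, w5b hm] <;> omega)] at eR1
    omega
  · -- h8
    obtain ⟨R1, hR1, eR1⟩ := adjCnt_SGF hm n (n / 200) g (ic hm) (ib hm)
    rw [if_neg (by rw [w1b hm, w1c hm] <;> omega),
      if_pos (by rw [w2b hm, w2c hm] <;> omega),
      if_pos (by rw [w3b hm, w3c hm] <;> omega),
      if_neg (by rw [w5b hm, w5c hm] <;> omega)] at eR1
    omega

end Final
section Assemble

variable {m : ℕ}

lemma cardBound (hm : 4 ≤ m) (n : ℕ)
    (hn : 500 * (m.factorial * m.factorial) + 1000000 ≤ n) :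
    ((n / 200) / (m.factorial * m.factorial)) ^ (m.factorial - 1)
      ≤ Set.ncard {S : Sym (Vote m) n |
          {x : Fin m | sQWinner (S : Multiset (Vote m)) x} ≠
          {x : Fin m | sDWinner (S : Multiset (Vote m)) x}} := by
  classical
  set L := (n / 200) / (m.factorial * m.factorial) with hL
  have hK24 : 24 ≤ m.factorial := by
    have h := Nat.factorial_le hm
    have h4 : Nat.factorial 4 = 24 := rfl
    omega
  have hTle : 200 * (n / 200) ≤ n := by
    have := Nat.div_mul_le_self n 200
    omega
  have hKL : 24 * (m.factorial * L) ≤ n / 200 := by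
    have h1 : 24 * (m.factorial * L) ≤ m.factorial * (m.factorial * L) :=
      Nat.mul_le_mul_right _ hK24
    have h2 : m.factorial * (m.factorial * L) = L * (m.factorial * m.factorial) := by ring
    have h3 : L * (m.factorial * m.factorial) ≤ n / 200 := by
      rw [hL]; exact Nat.div_mul_le_self _ _
    omega
  have hcards : ∀ g : {w : Vote m // w ≠ w1 hm} → Fin L,
      Multiset.card (SGF hm n (n / 200) g) = n := by
    intro g
    apply SGF_card
    have := gg_sum_le hm g
    omega
  let F : ({w : Vote m // w ≠ w1 hm} → Fin L) → Sym (Vote m) n :=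
    fun g => ⟨SGF hm n (n / 200) g, hcards g⟩
  have hFinj : Function.Injective F := by
    intro g g' hgg
    have hmul : SGF hm n (n / 200) g = SGF hm n (n / 200) g' := congrArg Subtype.val hgg
    funext u
    rcases u with ⟨w, hw⟩
    have h1 := SGF_count hm n (n / 200) g hw
    have h2 := SGF_count hm n (n / 200) g' hw
    rw [hmul] at h1
    have h3 : ggF hm g w = ggF hm g' w := by omega
    rw [ggF, ggF, dif_neg hw, dif_neg hw] at h3
    exact Fin.val_injective h3
  have hrange : Set.range F ⊆ {S : Sym (Vote m) n |
      {x : Fin m | sQWinner (S : Multiset (Vote m)) x} ≠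
      {x : Fin m | sDWinner (S : Multiset (Vote m)) x}} := by
    rintro S ⟨g, rfl⟩
    obtain ⟨hQ, hD⟩ := hGoodLemma hm n hn hL g
    intro hEq
    have hEq' : {x : Fin m | sQWinner (SGF hm n (n / 200) g) x}
        = {x : Fin m | sDWinner (SGF hm n (n / 200) g) x} := hEq
    have hmem : ia hm ∈ {x : Fin m | sQWinner (SGF hm n (n / 200) g) x} := hQ
    rw [hEq'] at hmem
    exact hD hmem
  have hDcard : Fintype.card {w : Vote m // w ≠ w1 hm} = m.factorial - 1 := by
    calc Fintype.card {w : Vote m // w ≠ w1 hm}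
        = Finset.card (Finset.univ.filter (fun w : Vote m => w ≠ w1 hm)) :=
          Fintype.card_subtype _
      _ = Finset.card (Finset.univ.erase (w1 hm)) := by
          congr 1
          ext w
          simp [Finset.mem_erase, Finset.mem_filter, and_comm]
      _ = m.factorial - 1 := by
          rw [Finset.card_erase_of_mem (Finset.mem_univ _), Finset.card_univ,
            Fintype.card_perm, Fintype.card_fin]
  calc L ^ (m.factorial - 1)
      = Fintype.card ({w : Vote m // w ≠ w1 hm} → Fin L) := by
        rw [Fintype.card_fun, Fintype.card_fin, hDcard]
    _ = (Set.range F).ncard := by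
        rw [← Set.image_univ, Set.ncard_image_of_injective _ hFinj, Set.ncard_univ,
          Nat.card_eq_fintype_card]
    _ ≤ _ := Set.ncard_le_ncard hrange (Set.toFinite _)

end Assemble
/-- For every `m ≥ 4`, the proportion, among all voting situations with `n` agents
on `m` alternatives, of those in which the set of DQ winners differs from the
set of Dodgson winners does not converge to `0` as `n → ∞` (equivalently, under
the Impartial Anonymous Culture assumption, the probability that the DQ and
Dodgson rules pick the same set of winners does not converge to 1). -/
theorem stmt_16 (m : ℕ) (hm : 4 ≤ m) :
    ¬ Filter.Tendsto (fun n : ℕ =>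
        (Set.ncard {S : Sym (Vote m) n |
            {x : Fin m | sQWinner (S : Multiset (Vote m)) x} ≠
            {x : Fin m | sDWinner (S : Multiset (Vote m)) x}} : ℝ) /
          Nat.choose (n + Nat.factorial m - 1) n)
      Filter.atTop (nhds 0) := by
  intro hT
  classical
  have hK24 : 24 ≤ m.factorial := by
    have h := Nat.factorial_le hm
    have h4 : Nat.factorial 4 = 24 := rfl
    omega
  have hKK576 : 576 ≤ m.factorial * m.factorial := Nat.mul_le_mul hK24 hK24
  have hfpos : (0:ℝ) < (m.factorial : ℝ) := by
    have := m.factorial_pos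
    exact_mod_cast this
  have h800 : (0:ℝ) < 800 * (m.factorial : ℝ) * (m.factorial : ℝ) :=
    mul_pos (mul_pos (by norm_num) hfpos) hfpos
  have hεpos : (0:ℝ) < (1 / (800 * (m.factorial : ℝ) * (m.factorial : ℝ))) ^ (m.factorial - 1) :=
    pow_pos (div_pos one_pos h800) _
  have hev := (hT.eventually_lt_const hεpos).and
    (Filter.eventually_ge_atTop (500 * (m.factorial * m.factorial) + 1000000))
  obtain ⟨n, hlt, hn⟩ := hev.exists
  set L := (n / 200) / (m.factorial * m.factorial) with hL
  have hcb := cardBound hm n hn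
  have hnpos : 0 < n := by omega
  have hKn : m.factorial ≤ n := by
    have h1 : m.factorial ≤ m.factorial * m.factorial :=
      Nat.le_mul_of_pos_left _ (by omega)
    omega
  have hchoose : (n + m.factorial - 1).choose n ≤ (2*n) ^ (m.factorial - 1) := by
    have h1 : n ≤ n + m.factorial - 1 := by omega
    have h2 : n + m.factorial - 1 - n = m.factorial - 1 := by omega
    have hsymm : (n + m.factorial - 1).choose n
        = (n + m.factorial - 1).choose (m.factorial - 1) := by
      rw [← h2, Nat.choose_symm h1]
    rw [hsymm]
    calc (n + m.factorial - 1).choose (m.factorial - 1)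
        ≤ (n + m.factorial - 1) ^ (m.factorial - 1) := Nat.choose_le_pow _ _
      _ ≤ (2*n) ^ (m.factorial - 1) := Nat.pow_le_pow_left (by omega) _
  have hchpos : 0 < (n + m.factorial - 1).choose n := Nat.choose_pos (by omega)
  have hnL : n ≤ 400 * ((m.factorial * m.factorial) * L) := by
    have hmod1 := Nat.div_add_mod n 200
    have hmod2 : (m.factorial * m.factorial) * L + (n / 200) % (m.factorial * m.factorial)
        = n / 200 := by
      rw [hL]; exact Nat.div_add_mod _ _
    have hmodlt1 : n % 200 < 200 := Nat.mod_lt _ (by norm_num)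
    have hmodlt2 : (n / 200) % (m.factorial * m.factorial) < m.factorial * m.factorial :=
      Nat.mod_lt _ (by omega)
    have h2L : 2 ≤ L := by
      rw [hL]
      have h1 : 2 * (m.factorial * m.factorial) * 200 ≤ n := by omega
      have h2 : 2 * (m.factorial * m.factorial) ≤ n / 200 :=
        (Nat.le_div_iff_mul_le (by norm_num)).2 h1
      exact (Nat.le_div_iff_mul_le (by omega)).2 h2
    have hL2 : 2 * (m.factorial * m.factorial) ≤ (m.factorial * m.factorial) * L := by
      calc 2 * (m.factorial * m.factorial) ≤ L * (m.factorial * m.factorial) :=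
            Nat.mul_le_mul_right _ h2L
        _ = (m.factorial * m.factorial) * L := by ring
    omega
  -- now the real-number estimate
  have hL0 : (0:ℝ) < (L:ℝ) := by
    have h2L : 0 < L := by
      rcases Nat.eq_zero_or_pos L with h0 | h1
      · rw [h0] at hnL; omega
      · exact h1
    exact_mod_cast h2L
  have h2npos : (0:ℝ) < 2 * (n:ℝ) := by positivity
  have hratio : 1 / (800 * (m.factorial : ℝ) * (m.factorial : ℝ)) ≤ (L:ℝ) / (2 * (n:ℝ)) := by
    rw [div_le_div_iff₀ h800 h2npos]
    have : (n:ℝ) ≤ 400 * ((m.factorial : ℝ) * (m.factorial : ℝ) * (L:ℝ)) := by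
      exact_mod_cast hnL
    nlinarith
  have hstep2 : (1 / (800 * (m.factorial : ℝ) * (m.factorial : ℝ))) ^ (m.factorial - 1)
      ≤ ((L:ℝ) / (2 * (n:ℝ))) ^ (m.factorial - 1) :=
    pow_le_pow_left₀ (le_of_lt (div_pos one_pos h800)) hratio _
  have hnum : ((L:ℝ)) ^ (m.factorial - 1)
      ≤ (Set.ncard {S : Sym (Vote m) n |
          {x : Fin m | sQWinner (S : Multiset (Vote m)) x} ≠
          {x : Fin m | sDWinner (S : Multiset (Vote m)) x}} : ℝ) := by
    have := hcb
    exact_mod_cast Nat.cast_le.2 this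
  have hden : ((n + m.factorial - 1).choose n : ℝ) ≤ (2 * (n:ℝ)) ^ (m.factorial - 1) := by
    have := hchoose
    push_cast
    exact_mod_cast this
  have hdenpos : (0:ℝ) < ((n + m.factorial - 1).choose n : ℝ) := by exact_mod_cast hchpos
  have hstep1 : ((L:ℝ)) ^ (m.factorial - 1) / (2 * (n:ℝ)) ^ (m.factorial - 1)
      ≤ (Set.ncard {S : Sym (Vote m) n |
          {x : Fin m | sQWinner (S : Multiset (Vote m)) x} ≠
          {x : Fin m | sDWinner (S : Multiset (Vote m)) x}} : ℝ)
        / ((n + m.factorial - 1).choose n : ℝ) :=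
    div_le_div₀ (Nat.cast_nonneg _) hnum hdenpos hden
  have hstep2' : (1 / (800 * (m.factorial : ℝ) * (m.factorial : ℝ))) ^ (m.factorial - 1)
      ≤ ((L:ℝ)) ^ (m.factorial - 1) / (2 * (n:ℝ)) ^ (m.factorial - 1) := by
    rw [← div_pow]
    exact hstep2
  have hfinal := le_trans hstep2' hstep1
  try simp only at hlt
  linarith
end

section
/- Let P be a profile of n votes on A, let a ∈ A, let k ≥ 1 be an integer, and let P^k denote the profile of kn votes in which each vote of P is repeated k times. Then Sc_D[P^k](a) ≤ k·Sc_D[P](a), and k·Sc_D[P](a) < Sc_D[P^k](a) + k·(m − 1)!·(m − 1)·e, where e denotes Euler's number. (Equivalently, the k-Dodgson score Sc_D^k(a) = Sc_D[P^k](a)/k satisfies Sc_D[P](a) − (m − 1)!(m − 1)e < Sc_D^k(a) ≤ Sc_D[P](a).) -/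
open Finset Filter

namespace S17
variable {m n : ℕ}

lemma swap_lt_iff {m : ℕ} {p q r s : Fin m} (hq : (q:ℕ) = (p:ℕ) + 1)
    (h1 : ¬(r = p ∧ s = q)) (h2 : ¬(r = q ∧ s = p)) :
    (Equiv.swap p q r < Equiv.swap p q s ↔ r < s) := by
  simp only [Fin.ext_iff, not_and] at h1 h2
  simp only [Equiv.swap_apply_def, Fin.lt_def]
  split_ifs <;> simp_all [Fin.ext_iff] <;> omega

def invSet (v w : Vote m) : Finset (Fin m × Fin m) :=
  Finset.univ.filter (fun x => v x.1 < v x.2 ∧ w x.2 < w x.1)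

def inv (v w : Vote m) : ℕ := (invSet v w).card

lemma inv_self (w : Vote m) : inv w w = 0 := by
  simp only [inv, Finset.card_eq_zero, invSet, Finset.filter_eq_empty_iff]
  intro x _
  rintro ⟨h1, h2⟩
  exact absurd h2 (not_lt.2 h1.le)

lemma inv_adjswap {v v' w : Vote m} (h : AdjSwapVote v v') : inv v w ≤ inv v' w + 1 := by
  obtain ⟨p, q, hq, rfl⟩ := h
  have hsub : invSet v w ⊆ insert (v.symm p, v.symm q) (invSet (v.trans (Equiv.swap p q)) w) := by
    intro x hx
    simp only [invSet, mem_filter, mem_univ, true_and] at hx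
    by_cases hx0 : x = (v.symm p, v.symm q)
    · rw [hx0]; exact mem_insert_self _ _
    · apply mem_insert_of_mem
      simp only [invSet, mem_filter, mem_univ, true_and]
      simp only [Equiv.trans_apply]
      refine ⟨?_, hx.2⟩
      rw [swap_lt_iff hq ?_ ?_]
      · exact hx.1
      · rintro ⟨e1, e2⟩
        apply hx0
        have : x.1 = v.symm p := by rw [← e1]; simp
        have h2 : x.2 = v.symm q := by rw [← e2]; simp
        rw [Prod.ext_iff]; exact ⟨this, h2⟩
      · rintro ⟨e1, e2⟩
        have := hx.1
        rw [e1, e2] at this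
        exact absurd this (by simp [Fin.lt_def, hq])
  calc inv v w ≤ (insert (v.symm p, v.symm q) (invSet (v.trans (Equiv.swap p q)) w)).card :=
        Finset.card_le_card hsub
    _ ≤ inv (v.trans (Equiv.swap p q)) w + 1 := Finset.card_insert_le _ _


-- chunk 2
def Phi (P Q : Profile m n) : ℕ := ∑ i, inv (P i) (Q i)

lemma phi_adjswap {P R Q : Profile m n} (h : AdjSwap P R) : Phi P Q ≤ Phi R Q + 1 := by
  obtain ⟨i, hv, hoth⟩ := h
  have key : ∀ j, inv (P j) (Q j) ≤ inv (R j) (Q j) + (if j = i then 1 else 0) := by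
    intro j
    by_cases hj : j = i
    · subst hj; simpa using inv_adjswap (w := Q j) hv
    · rw [hoth j hj]; simp [hj]
  calc Phi P Q ≤ ∑ j, (inv (R j) (Q j) + if j = i then 1 else 0) := Finset.sum_le_sum (fun j _ => key j)
    _ = Phi R Q + 1 := by rw [Finset.sum_add_distrib]; simp [Phi]

lemma reach_phi {ℓ : ℕ} : ∀ {P Q : Profile m n}, Reach AdjSwap ℓ P Q → Phi P Q ≤ ℓ := by
  induction ℓ with
  | zero => intro P Q h; cases h; simp [Phi, inv_self]
  | succ k ih =>
    intro P Q h
    obtain ⟨R, h1, h2⟩ := h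
    calc Phi P Q ≤ Phi R Q + 1 := phi_adjswap h1
      _ ≤ k + 1 := by have := ih h2; omega

/-- One step of raising alternative `a` in vote `v`. -/
def stepV (a : Fin m) (v : Vote m) : Vote m :=
  if h : 0 < (v a : ℕ) then
    v.trans (Equiv.swap ⟨(v a : ℕ) - 1, by omega⟩ (v a))
  else v

def raise (a : Fin m) (v : Vote m) (t : ℕ) : Vote m := (stepV a)^[t] v

lemma stepV_a {a : Fin m} {v : Vote m} (h : 0 < (v a : ℕ)) :
    ((stepV a v) a : ℕ) = (v a : ℕ) - 1 := by
  simp only [stepV, dif_pos h, Equiv.trans_apply, Equiv.swap_apply_right]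

lemma stepV_b {a b : Fin m} {v : Vote m} (h : 0 < (v a : ℕ)) (hb : b ≠ a) :
    ((stepV a v) b : ℕ) = if (v b : ℕ) = (v a : ℕ) - 1 then (v a : ℕ) else (v b : ℕ) := by
  simp only [stepV, dif_pos h, Equiv.trans_apply]
  rw [Equiv.swap_apply_def]
  have hba : (v b : ℕ) ≠ (v a : ℕ) := fun e => hb (v.injective (Fin.ext e))
  split_ifs <;> simp_all [Fin.ext_iff] <;> omega

lemma raise_a {a : Fin m} {v : Vote m} {t : ℕ} (ht : t ≤ (v a : ℕ)) :
    ((raise a v t) a : ℕ) = (v a : ℕ) - t := by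
  induction t with
  | zero => simp [raise]
  | succ s ih =>
    have hs : s ≤ (v a : ℕ) := by omega
    have : ((raise a v s) a : ℕ) = (v a : ℕ) - s := ih hs
    rw [raise, Function.iterate_succ_apply', ← raise]
    rw [stepV_a (by omega), this]
    omega

lemma raise_b {a b : Fin m} {v : Vote m} (hb : b ≠ a) : ∀ {t : ℕ}, t ≤ (v a : ℕ) →
    ((raise a v t) b : ℕ) =
      if (v b : ℕ) + t < (v a : ℕ) ∨ (v a : ℕ) < (v b : ℕ) then (v b : ℕ) else (v b : ℕ) + 1 := by
  intro t
  induction t with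
  | zero =>
    intro ht
    have hba : (v b : ℕ) ≠ (v a : ℕ) := fun e => hb (v.injective (Fin.ext e))
    simp only [raise, Function.iterate_zero, id_eq, add_zero]
    split_ifs with h1
    · rfl
    · omega
  | succ s ih =>
    intro ht
    have hs : s ≤ (v a : ℕ) := by omega
    have hsa : ((raise a v s) a : ℕ) = (v a : ℕ) - s := raise_a hs
    have hsb := ih hs
    have hba : (v b : ℕ) ≠ (v a : ℕ) := fun e => hb (v.injective (Fin.ext e))
    rw [raise, Function.iterate_succ_apply', ← raise]
    rw [stepV_b (by omega) hb, hsa, hsb]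
    split_ifs <;> omega

lemma raise_lt {a b : Fin m} {v : Vote m} {t : ℕ} (hb : b ≠ a) (ht : t ≤ (v a : ℕ)) :
    ((raise a v t) b < (raise a v t) a ↔ (v b : ℕ) + t < (v a : ℕ)) := by
  rw [Fin.lt_def, raise_a ht, raise_b hb ht]
  have hba : (v b : ℕ) ≠ (v a : ℕ) := fun e => hb (v.injective (Fin.ext e))
  split_ifs <;> omega

lemma adj_stepV {a : Fin m} {v : Vote m} (h : 0 < (v a : ℕ)) : AdjSwapVote v (stepV a v) := by
  refine ⟨⟨(v a : ℕ) - 1, by omega⟩, v a, by simp; omega, ?_⟩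
  simp only [stepV, dif_pos h]

lemma reach_raise {a : Fin m} : ∀ (t : ℕ) (v : Vote m), t ≤ (v a : ℕ) →
    Reach AdjSwapVote t v (raise a v t) := by
  intro t
  induction t with
  | zero => intro v _; exact rfl
  | succ s ih =>
    intro v ht
    have h0 : 0 < (v a : ℕ) := by omega
    refine ⟨stepV a v, adj_stepV h0, ?_⟩
    have : raise a v (s + 1) = raise a (stepV a v) s := by
      simp [raise, Function.iterate_succ_apply]
    rw [this]
    apply ih
    rw [stepV_a h0]; omega


-- chunk 3
lemma reach_pi : ∀ (N : ℕ) (P Q : Profile m n) (t : Fin n → ℕ), (∑ i, t i) = N →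
    (∀ i, Reach AdjSwapVote (t i) (P i) (Q i)) → Reach AdjSwap N P Q := by
  intro N
  induction N with
  | zero =>
    intro P Q t hsum hW
    have : ∀ i, t i = 0 := by
      intro i
      have := Finset.sum_eq_zero_iff.1 hsum i (mem_univ i)
      exact this
    have : P = Q := by
      funext i
      have h := hW i
      rw [this i] at h
      exact h
    exact this ▸ rfl
  | succ N ih =>
    intro P Q t hsum hW
    have hex : ∃ i, t i ≠ 0 := by
      by_contra hc
      push_neg at hc
      simp [hc] at hsum
    obtain ⟨i, hi⟩ := hex
    obtain ⟨s, hs⟩ : ∃ s, t i = s + 1 := ⟨t i - 1, by omega⟩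
    have hWi := hW i
    rw [hs] at hWi
    obtain ⟨v', hadj, hrest⟩ := hWi
    refine ⟨Function.update P i v', ⟨i, ?_, fun j hj => Function.update_of_ne hj _ _⟩, ?_⟩
    · rw [Function.update_self]; exact hadj
    · apply ih (Function.update P i v') Q (Function.update t i s)
      · have h1 := Finset.sum_update_of_mem (f := t) (Finset.mem_univ i) s
        have h2 := Finset.sum_eq_sum_sdiff_singleton_add (Finset.mem_univ i) t
        rw [hsum] at h2
        omega
      · intro j
        by_cases hj : j = i
        · subst hj
          rw [Function.update_self, Function.update_self]
          exact hrest
        · rw [Function.update_of_ne hj, Function.update_of_ne hj]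
          exact hW j
  

lemma nAbove_total (P : Profile m n) {x y : Fin m} (h : x ≠ y) :
    nAbove P x y + nAbove P y x = n := by
  have hiff : ∀ i, (P i y < P i x) ↔ ¬ (P i x < P i y) := by
    intro i
    have hne : P i x ≠ P i y := fun e => h ((P i).injective e)
    constructor
    · intro h1 h2; exact absurd h1 (not_lt.2 h2.le)
    · intro h1; exact (hne.lt_or_gt).resolve_left h1
  have : nAbove P y x = (univ.filter (fun i => ¬ (P i x < P i y))).card := by
    unfold nAbove
    congr 1
    apply Finset.filter_congr
    intro i _
    simp [hiff i]
  rw [nAbove, this, Finset.card_filter_add_card_filter_not]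
  simp

def passCnt (P : Profile m n) (a : Fin m) (t : Fin n → ℕ) (b : Fin m) : ℕ :=
  (univ.filter (fun i => P i b < P i a ∧ (P i a : ℕ) ≤ (P i b : ℕ) + t i)).card

lemma realize (P : Profile m n) (a : Fin m) (t : Fin n → ℕ) (hta : ∀ i, t i ≤ (P i a : ℕ))
    (hpass : ∀ b, b ≠ a → nAbove P b a ≤ nAbove P a b + 2 * passCnt P a t b) :
    ∃ Q, Reach AdjSwap (∑ i, t i) P Q ∧ CondorcetTieWinner Q a := by
  set Q : Profile m n := fun i => raise a (P i) (t i) with hQ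
  refine ⟨Q, reach_pi _ P Q t rfl (fun i => reach_raise (t i) (P i) (hta i)), ?_⟩
  intro b hb
  have hQlt : ∀ i, (Q i b < Q i a ↔ (P i b : ℕ) + t i < (P i a : ℕ)) :=
    fun i => raise_lt hb (hta i)
  have hsplit : nAbove P b a = passCnt P a t b + nAbove Q b a := by
    rw [nAbove, nAbove, passCnt, ← Finset.card_union_of_disjoint, ← Finset.filter_or]
    · congr 1
      apply Finset.filter_congr
      intro i _
      have := hta i
      have h1 := hQlt i
      rw [h1]
      simp only [Fin.lt_def]
      omega
    · rw [Finset.disjoint_filter]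
      intro i _ hx
      rw [hQlt i]
      omega
  have htot : nAbove Q b a + nAbove Q a b = n := nAbove_total Q hb
  have htotP : nAbove P b a + nAbove P a b = n := nAbove_total P hb
  have := hpass b hb
  rw [adv]
  omega

lemma extract {N : ℕ} (P Q : Profile m n) (a : Fin m)
    (hreach : Reach AdjSwap N P Q) (hctw : CondorcetTieWinner Q a) :
    ∃ t : Fin n → ℕ, (∀ i, t i ≤ (P i a : ℕ)) ∧ (∑ i, t i) ≤ N ∧
      (∀ b, b ≠ a → nAbove P b a ≤ nAbove P a b + 2 * passCnt P a t b) := by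
  set U : Fin n → Finset (Fin m) :=
    fun i => univ.filter (fun c => P i c < P i a ∧ Q i a < Q i c) with hU
  set t : Fin n → ℕ := fun i => (U i).sup (fun c => (P i a : ℕ) - (P i c : ℕ)) with ht
  have hta : ∀ i, t i ≤ (P i a : ℕ) := by
    intro i
    apply Finset.sup_le
    intro c _
    omega
  refine ⟨t, hta, ?_, ?_⟩
  · -- sum bound via inversions
    have hinv : ∀ i, t i ≤ inv (P i) (Q i) := by
      intro i
      rcases (U i).eq_empty_or_nonempty with he | hne
      · simp [ht, he]
      · obtain ⟨u₀, hu₀mem, hsup⟩ := Finset.exists_mem_eq_sup (U i) hne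
          (fun c => (P i a : ℕ) - (P i c : ℕ))
        simp only [hU, mem_filter, mem_univ, true_and] at hu₀mem
        obtain ⟨hu1, hu2⟩ := hu₀mem
        have hvam : ((P i a : ℕ)) < m := (P i a).isLt
        have hcard : t i = (Finset.Ico ((P i u₀ : ℕ)) ((P i a : ℕ))).card := by
          rw [Nat.card_Ico]; exact hsup
        rw [hcard, inv]
        apply Finset.card_le_card_of_injOn
          (fun p => if hp : p < m then
            (if Q i a < Q i ((P i).symm ⟨p, hp⟩) then (((P i).symm ⟨p, hp⟩), a)
             else (u₀, ((P i).symm ⟨p, hp⟩))) else (a, a))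
        · intro p hp
          simp only [Finset.coe_Ico, Set.mem_Ico] at hp
          have hpm : p < m := by omega
          simp only [Finset.mem_coe]
          rw [dif_pos hpm]
          set c := (P i).symm ⟨p, hpm⟩ with hc
          have hvc : (P i c : ℕ) = p := by rw [hc]; simp
          have hca : c ≠ a := by
            intro e
            rw [e] at hvc
            omega
          by_cases hw : Q i a < Q i c
          · rw [if_pos hw]
            simp only [invSet, Finset.mem_coe, mem_filter, mem_univ, true_and]
            constructor
            · rw [Fin.lt_def, hvc]; omega
            · exact hw
          · rw [if_neg hw]
            simp only [invSet, Finset.mem_coe, mem_filter, mem_univ, true_and]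
            have hcu : c ≠ u₀ := by
              intro e
              rw [e] at hw
              exact hw hu2
            constructor
            · rw [Fin.lt_def, hvc]
              have : (P i u₀ : ℕ) ≠ p := by
                intro e
                apply hcu
                rw [hc, Equiv.symm_apply_eq]
                exact (Fin.ext e).symm
              omega
            · have hwca : Q i c < Q i a := by
                rcases (show Q i c ≠ Q i a from fun e => hca ((Q i).injective e)).lt_or_gt with h | h
                · exact h
                · exact absurd h hw
              exact hwca.trans hu2
        · intro p hp p' hp' heq
          simp only [Finset.coe_Ico, Set.mem_Ico] at hp hp'
          have hpm : p < m := by omega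
          have hpm' : p' < m := by omega
          simp only [dif_pos hpm, dif_pos hpm'] at heq
          set c := (P i).symm ⟨p, hpm⟩ with hc
          set c' := (P i).symm ⟨p', hpm'⟩ with hc'
          have hvc : (P i c : ℕ) = p := by rw [hc]; simp
          have hvc' : (P i c' : ℕ) = p' := by rw [hc']; simp
          have hca : c ≠ a := fun e => by rw [e] at hvc; omega
          have hca' : c' ≠ a := fun e => by rw [e] at hvc'; omega
          have hcc : c = c' → p = p' := by
            intro e
            rw [← hvc, ← hvc', e]
          by_cases hw : Q i a < Q i c <;> by_cases hw' : Q i a < Q i c'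
          · rw [if_pos hw, if_pos hw'] at heq
            rw [Prod.ext_iff] at heq
            exact hcc heq.1
          · rw [if_pos hw, if_neg hw'] at heq
            rw [Prod.ext_iff] at heq
            exact absurd heq.2.symm hca'
          · rw [if_neg hw, if_pos hw'] at heq
            rw [Prod.ext_iff] at heq
            exact absurd heq.2 hca
          · rw [if_neg hw, if_neg hw'] at heq
            rw [Prod.ext_iff] at heq
            exact hcc heq.2
    calc (∑ i, t i) ≤ ∑ i, inv (P i) (Q i) := Finset.sum_le_sum (fun i _ => hinv i)
      _ ≤ N := reach_phi hreach
  · intro b hb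
    set F : Finset (Fin n) := univ.filter (fun i => P i b < P i a ∧ Q i a < Q i b) with hF
    have h1 : nAbove P b a ≤ F.card + nAbove Q b a := by
      calc nAbove P b a ≤ (F ∪ univ.filter (fun i => Q i b < Q i a)).card := by
            apply Finset.card_le_card
            intro i hi
            simp only [nAbove, mem_filter, mem_univ, true_and] at hi
            rcases (show Q i b ≠ Q i a from fun e => hb ((Q i).injective e)).lt_or_gt with h | h
            · exact Finset.mem_union_right _ (by simp [h])
            · exact Finset.mem_union_left _ (by simp [hF, hi, h])
        _ ≤ F.card + nAbove Q b a := Finset.card_union_le _ _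
    have h2 : nAbove Q b a ≤ nAbove Q a b := by
      have := hctw b hb
      rw [adv] at this
      omega
    have h3 : nAbove Q a b ≤ nAbove P a b + F.card := by
      calc nAbove Q a b ≤ (univ.filter (fun i => P i a < P i b) ∪ F).card := by
            apply Finset.card_le_card
            intro i hi
            simp only [nAbove, mem_filter, mem_univ, true_and] at hi
            rcases (show P i a ≠ P i b from fun e => hb (((P i).injective e).symm)).lt_or_gt with h | h
            · exact Finset.mem_union_left _ (by simp [h])
            · exact Finset.mem_union_right _ (by simp [hF, hi, h])
        _ ≤ nAbove P a b + F.card := Finset.card_union_le _ _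
    have h4 : F.card ≤ passCnt P a t b := by
      apply Finset.card_le_card
      intro i hi
      simp only [hF, mem_filter, mem_univ, true_and] at hi
      simp only [passCnt, mem_filter, mem_univ, true_and]
      refine ⟨hi.1, ?_⟩
      have hmem : b ∈ U i := by simp [hU, hi.1, hi.2]
      have hle : (P i a : ℕ) - (P i b : ℕ) ≤ t i :=
        Finset.le_sup (f := fun c => (P i a : ℕ) - (P i c : ℕ)) hmem
      have hlt : (P i b : ℕ) < (P i a : ℕ) := hi.1
      omega
    omega


lemma fin_downset {cc : ℕ} {p : Fin cc → Prop} [DecidablePred p]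
    (hdown : ∀ y, p y → ∀ x, x ≤ y → p x) (x : Fin cc) :
    p x ↔ (x : ℕ) < (univ.filter p).card := by
  constructor
  · intro hx
    have hsub : Finset.Iic x ⊆ univ.filter p := by
      intro y hy
      simp only [mem_Iic] at hy
      simp only [mem_filter, mem_univ, true_and]
      exact hdown x hx y hy
    have := Finset.card_le_card hsub
    rw [Fin.card_Iic] at this
    omega
  · intro hx
    by_contra hpx
    have hsub : univ.filter p ⊆ Finset.Iio x := by
      intro y hy
      simp only [mem_filter, mem_univ, true_and] at hy
      simp only [mem_Iio]
      by_contra hxy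
      exact hpx (hdown y hy x (le_of_not_gt hxy))
    have := Finset.card_le_card hsub
    rw [Fin.card_Iio] at this
    omega

lemma nat_downset_Icc {S : Finset ℕ} {M r : ℕ} (hsub : S ⊆ Finset.Icc 1 M)
    (hdown : ∀ y ∈ S, ∀ x, 1 ≤ x → x ≤ y → x ∈ S) (hr : 1 ≤ r) :
    r ∈ S ↔ r ≤ S.card := by
  constructor
  · intro hx
    have hsub2 : Finset.Icc 1 r ⊆ S := by
      intro y hy
      simp only [mem_Icc] at hy
      exact hdown r hx y hy.1 hy.2
    have := Finset.card_le_card hsub2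
    rwa [Nat.card_Icc, Nat.add_sub_cancel] at this
  · intro hx
    by_contra hrS
    have hsub2 : S ⊆ Finset.Icc 1 (r - 1) := by
      intro y hy
      have h1 := hsub hy
      simp only [mem_Icc] at h1 ⊢
      refine ⟨h1.1, ?_⟩
      by_contra hyr
      exact hrS (hdown y hy r hr (by omega))
    have := Finset.card_le_card hsub2
    rw [Nat.card_Icc] at this
    omega

lemma classround (C : Finset (Fin n)) (k M : ℕ) (S : ℕ → ℕ) (hk : 1 ≤ k)
    (hanti : ∀ ⦃r r'⦄, r ≤ r' → S r' ≤ S r)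
    (hbound : ∀ r, 1 ≤ r → S r ≤ k * C.card)
    (hzero : ∀ r, M ≤ r → S r = 0) (hM : 1 ≤ M) :
    ∃ u : Fin n → ℕ,
      (∀ r, 1 ≤ r → S r ≤ k * (C.filter (fun i => r ≤ u i)).card) ∧
      k * (∑ i ∈ C, u i) ≤ (∑ r ∈ Finset.Icc 1 M, S r) + k * (M - 1) := by
  classical
  set e := C.equivFin with he
  set U : ℕ → ℕ := fun j => ((Finset.Icc 1 M).filter (fun r => j + 1 ≤ S r)).card with hUdef
  set u : Fin n → ℕ := fun i => if h : i ∈ C then U (k * (e ⟨i, h⟩ : ℕ)) else 0 with hu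
  have hUanti : ∀ ⦃j j'⦄, j ≤ j' → U j' ≤ U j := by
    intro j j' hj
    apply Finset.card_le_card
    intro r hr
    simp only [mem_filter] at hr ⊢
    exact ⟨hr.1, by omega⟩
  have hUchar : ∀ j r, 1 ≤ r → (r ≤ U j ↔ j + 1 ≤ S r) := by
    intro j r hr
    have hdc : ∀ y ∈ (Finset.Icc 1 M).filter (fun r => j + 1 ≤ S r), ∀ x, 1 ≤ x → x ≤ y →
        x ∈ (Finset.Icc 1 M).filter (fun r => j + 1 ≤ S r) := by
      intro y hy x hx1 hxy
      simp only [mem_filter, mem_Icc] at hy ⊢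
      exact ⟨⟨hx1, le_trans hxy hy.1.2⟩, le_trans hy.2 (hanti hxy)⟩
    rw [← nat_downset_Icc (Finset.filter_subset _ _) hdc hr]
    simp only [mem_filter, mem_Icc]
    constructor
    · rintro ⟨_, h⟩; exact h
    · intro h
      refine ⟨⟨hr, ?_⟩, h⟩
      by_contra hrM
      rw [hzero r (by omega)] at h
      omega
  have hU0 : U 0 ≤ M - 1 := by
    have hsub : (Finset.Icc 1 M).filter (fun r => 0 + 1 ≤ S r) ⊆ Finset.Icc 1 (M - 1) := by
      intro r hr
      simp only [mem_filter, mem_Icc] at hr ⊢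
      refine ⟨hr.1.1, ?_⟩
      by_contra hrM
      have := hzero r (by omega)
      omega
    have := Finset.card_le_card hsub
    rwa [Nat.card_Icc] at this
  refine ⟨u, ?_, ?_⟩
  · -- coverage
    intro r hr
    have hbij : (C.filter (fun i => r ≤ u i)).card =
        ((univ : Finset (Fin C.card)).filter (fun (l : Fin C.card) => k * (l : ℕ) + 1 ≤ S r)).card := by
      apply Finset.card_bij (fun i hi => e ⟨i, (Finset.mem_filter.1 hi).1⟩)
      · intro i hi
        simp only [mem_filter, mem_univ, true_and]
        have h2 := (Finset.mem_filter.1 hi).2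
        rw [hu] at h2
        simp only [dif_pos (Finset.mem_filter.1 hi).1] at h2
        exact (hUchar _ r hr).1 h2
      · intro i hi i' hi' heq
        have := e.injective heq
        exact congrArg Subtype.val this
      · intro l hl
        simp only [mem_filter, mem_univ, true_and] at hl
        refine ⟨(e.symm l).1, ?_, ?_⟩
        · simp only [mem_filter]
          refine ⟨(e.symm l).2, ?_⟩
          rw [hu]
          simp only [dif_pos (e.symm l).2]
          rw [hUchar _ r hr, Subtype.coe_eta, e.apply_symm_apply]
          exact hl
        · rw [Subtype.coe_eta, e.apply_symm_apply]
    rw [hbij]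
    set c := ((univ : Finset (Fin C.card)).filter
      (fun (l : Fin C.card) => k * (l : ℕ) + 1 ≤ S r)).card with hc
    rcases Nat.lt_or_ge c C.card with hlt | hge
    · have hdown : ∀ (y : Fin C.card), (fun (l : Fin C.card) => k * (l : ℕ) + 1 ≤ S r) y →
          ∀ x, x ≤ y → (fun (l : Fin C.card) => k * (l : ℕ) + 1 ≤ S r) x := by
        intro y hy x hxy
        have : k * (x : ℕ) ≤ k * (y : ℕ) := Nat.mul_le_mul_left k hxy
        omega
      have hiff := fin_downset hdown (⟨c, hlt⟩ : Fin C.card)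
      simp only [Fin.val_mk] at hiff
      rw [← hc] at hiff
      have hnot : ¬ (k * c + 1 ≤ S r) := by
        intro h
        exact absurd (hiff.mp h) (lt_irrefl c)
      omega
    · calc S r ≤ k * C.card := hbound r hr
        _ ≤ k * c := Nat.mul_le_mul_left k hge
  · -- cost bound
    have hsum1 : ∑ i ∈ C, u i = ∑ l ∈ Finset.range C.card, U (k * l) := by
      rw [← Finset.sum_attach C u, ← Fin.sum_univ_eq_sum_range (fun l => U (k * l)) C.card]
      rw [← Finset.univ_eq_attach]
      exact Fintype.sum_equiv e _ _
        (fun x => by rw [hu]; simp only [dif_pos x.2, Subtype.coe_eta])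
    have htel : ∀ c : ℕ, k * (∑ l ∈ Finset.range (c+1), U (k * l)) ≤
        k * U 0 + ∑ j ∈ Finset.range (k * c), U j := by
      intro c
      induction c with
      | zero => simp
      | succ c ih =>
        rw [Finset.sum_range_succ, Nat.mul_add]
        have hstep : k * U (k * (c+1)) ≤ ∑ j ∈ Finset.Ico (k*c) (k*(c+1)), U j := by
          have h1 := Finset.card_nsmul_le_sum (Finset.Ico (k*c) (k*(c+1))) U (U (k*(c+1)))
            (fun j hj => hUanti (by simp only [Finset.mem_Ico] at hj; omega))
          rwa [Nat.card_Ico, smul_eq_mul,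
            show k*(c+1) - k*c = k by rw [Nat.mul_succ]; omega] at h1
        have hsplit : ∑ j ∈ Finset.range (k*c), U j + ∑ j ∈ Finset.Ico (k*c) (k*(c+1)), U j
            = ∑ j ∈ Finset.range (k*(c+1)), U j := by
          rw [Finset.range_eq_Ico, Finset.range_eq_Ico]
          exact Finset.sum_Ico_consecutive U (Nat.zero_le _)
            (Nat.mul_le_mul_left k (Nat.le_succ c))
        omega
    have hdc : ∀ J : ℕ, ∑ j ∈ Finset.range J, U j = ∑ r ∈ Finset.Icc 1 M, min (S r) J := by
      intro J
      have hU : ∀ j, U j = ∑ r ∈ Finset.Icc 1 M, if j + 1 ≤ S r then 1 else 0 := by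
        intro j
        rw [hUdef]
        exact Finset.card_filter _ _
      calc ∑ j ∈ Finset.range J, U j
          = ∑ j ∈ Finset.range J, ∑ r ∈ Finset.Icc 1 M, if j + 1 ≤ S r then 1 else 0 := by
            exact Finset.sum_congr rfl (fun j _ => hU j)
        _ = ∑ r ∈ Finset.Icc 1 M, ∑ j ∈ Finset.range J, if j + 1 ≤ S r then 1 else 0 :=
            Finset.sum_comm
        _ = ∑ r ∈ Finset.Icc 1 M, min (S r) J := by
            apply Finset.sum_congr rfl
            intro r _
            rw [← Finset.card_filter]
            have : (Finset.range J).filter (fun j => j + 1 ≤ S r) = Finset.range (min (S r) J) := by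
              ext j
              simp only [Finset.mem_filter, Finset.mem_range, lt_min_iff]
              omega
            rw [this, Finset.card_range]
    rcases Nat.eq_zero_or_pos C.card with hc0 | hcpos
    · have hCe : C = ∅ := Finset.card_eq_zero.mp hc0
      rw [hCe]
      simp
    · obtain ⟨c, hc1⟩ : ∃ c, C.card = c + 1 := ⟨C.card - 1, by omega⟩
      rw [hsum1, hc1]
      have hlast : ∑ j ∈ Finset.range (k*(c+1)), U j ≤ ∑ r ∈ Finset.Icc 1 M, S r := by
        rw [hdc (k*(c+1))]
        apply Finset.sum_le_sum
        intro r hr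
        exact min_le_left _ _
      have h2 : ∑ j ∈ Finset.range (k*c), U j ≤ ∑ j ∈ Finset.range (k*(c+1)), U j :=
        Finset.sum_le_sum_of_subset (Finset.range_subset_range.2 (Nat.mul_le_mul_left k (by omega)))
      have h3 : k * U 0 ≤ k * (M-1) := Nat.mul_le_mul_left k hU0
      have h4 := htel c
      omega


lemma sum_prodfin {n k : ℕ} (g : Fin n → ℕ) :
    ∑ pos : Fin (n * k), g ((finProdFinEquiv.symm pos).1) = k * ∑ i, g i := by
  rw [← Equiv.sum_comp (finProdFinEquiv : Fin n × Fin k ≃ Fin (n * k))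
      (fun pos => g ((finProdFinEquiv.symm pos).1))]
  simp only [Equiv.symm_apply_apply]
  rw [Fintype.sum_prod_type]
  simp [Finset.sum_const, Finset.mul_sum, mul_comm]

lemma card_prodfin {n k : ℕ} (p : Fin n → Prop) [DecidablePred p] :
    ((univ : Finset (Fin (n*k))).filter (fun pos => p ((finProdFinEquiv.symm pos).1))).card
      = k * ((univ : Finset (Fin n)).filter p).card := by
  rw [Finset.card_filter, Finset.card_filter]
  exact sum_prodfin (fun i => if p i then 1 else 0)

abbrev stackT (m : ℕ) (a : Fin m) := Σ j : Fin m, (Fin (j : ℕ) ↪ {b : Fin m // b ≠ a})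

def keyF (a : Fin m) (v : Vote m) : Fin m → ℕ :=
  fun b => if v b < v a then (v a : ℕ) - (v b : ℕ) else 0

def stackOf (a : Fin m) (v : Vote m) : stackT m a :=
  ⟨v a, ⟨fun p => ⟨v.symm ⟨(p : ℕ), lt_trans p.isLt (v a).isLt⟩, by
      intro h
      have h2 := congrArg v h
      rw [Equiv.apply_symm_apply] at h2
      have h3 := congrArg Fin.val h2
      simp only [Fin.val_mk] at h3
      have hp := p.isLt
      omega⟩, by
    intro p p' h
    simp only [Subtype.mk_eq_mk, EmbeddingLike.apply_eq_iff_eq, Fin.mk.injEq] at h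
    exact Fin.ext h⟩⟩

noncomputable def keyS (a : Fin m) (σ : stackT m a) : Fin m → ℕ :=
  fun b => ∑ p : Fin (σ.1 : ℕ), if (σ.2 p : {b : Fin m // b ≠ a}).1 = b
    then (σ.1 : ℕ) - (p : ℕ) else 0

lemma keyS_stackOf (a : Fin m) (v : Vote m) : keyS a (stackOf a v) = keyF a v := by
  funext b
  show (∑ p : Fin ((v a : ℕ)), if (v.symm ⟨(p : ℕ), lt_trans p.isLt (v a).isLt⟩ : Fin m) = b
      then (v a : ℕ) - (p : ℕ) else 0) = keyF a v b
  have hcond : ∀ p : Fin ((v a : ℕ)),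
      ((v.symm ⟨(p : ℕ), lt_trans p.isLt (v a).isLt⟩ : Fin m) = b ↔ (p : ℕ) = (v b : ℕ)) := by
    intro p
    rw [Equiv.symm_apply_eq]
    constructor
    · intro h; exact congrArg Fin.val h
    · intro h; exact Fin.ext h
  simp only [hcond]
  by_cases hb : v b < v a
  · rw [keyF]
    simp only [if_pos hb]
    rw [Finset.sum_eq_single (⟨(v b : ℕ), hb⟩ : Fin ((v a : ℕ)))]
    · simp
    · intro p _ hp
      rw [if_neg]
      intro hval
      exact hp (Fin.ext (by simpa using hval))
    · intro h
      exact absurd (Finset.mem_univ _) h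
  · rw [keyF]
    simp only [if_neg hb]
    apply Finset.sum_eq_zero
    intro p _
    rw [if_neg]
    intro hval
    have := p.isLt
    omega

lemma card_stackT (a : Fin m) :
    Fintype.card (stackT m a) = ∑ j ∈ Finset.range m, (m-1).descFactorial j := by
  classical
  rw [Fintype.card_sigma]
  rw [← Fin.sum_univ_eq_sum_range (fun j => (m-1).descFactorial j) m]
  apply Finset.sum_congr rfl
  intro j _
  rw [Fintype.card_embedding_eq]
  congr 1
  · have hc := Fintype.card_subtype_compl (fun b : Fin m => b = a)
    simp only [Fintype.card_subtype_eq, Fintype.card_fin] at hc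
    exact hc
  · exact Fintype.card_fin _

lemma sum_descF_lt {m : ℕ} (hm : 2 ≤ m) :
    (↑(∑ j ∈ Finset.range m, (m-1).descFactorial j) : ℝ) <
      (m-1).factorial * Real.exp 1 := by
  push_cast
  have h1 : ∀ j ∈ Finset.range m, ((m-1).descFactorial j : ℝ) =
      ((m-1).factorial : ℝ) * (1 / ((m-1-j).factorial : ℝ)) := by
    intro j hj
    simp only [Finset.mem_range] at hj
    have hj' : j ≤ m - 1 := by omega
    have hfac := Nat.factorial_mul_descFactorial hj'
    have heq : ((m-1-j).factorial : ℝ) * ((m-1).descFactorial j : ℝ) = ((m-1).factorial : ℝ) := by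
      exact_mod_cast congrArg (Nat.cast : ℕ → ℝ) hfac
    have hpos : (0:ℝ) < ((m-1-j).factorial : ℝ) := by positivity
    field_simp
    linarith [heq]
  rw [Finset.sum_congr rfl h1, ← Finset.mul_sum]
  apply mul_lt_mul_of_pos_left
  · have hreflect : ∑ j ∈ Finset.range m, (1 / ((m-1-j).factorial : ℝ)) =
        ∑ j ∈ Finset.range m, (1 / ((j).factorial : ℝ)) :=
      Finset.sum_range_reflect (fun j => 1 / ((j).factorial : ℝ)) m
    rw [hreflect]
    have h2 := Real.sum_le_exp_of_nonneg (by norm_num : (0:ℝ) ≤ 1) (m+1)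
    simp only [one_pow] at h2
    rw [Finset.sum_range_succ] at h2
    have h3 : (0:ℝ) < 1 / (m.factorial : ℝ) := by positivity
    linarith
  · positivity

-- layer cake
lemma layercake {N M : ℕ} (T : Fin N → ℕ) (hT : ∀ pos, T pos < M) :
    ∑ r ∈ Finset.Icc 1 M, ((univ : Finset (Fin N)).filter (fun pos => r ≤ T pos)).card
      = ∑ pos, T pos := by
  have h1 : ∀ r, ((univ : Finset (Fin N)).filter (fun pos => r ≤ T pos)).card
      = ∑ pos, if r ≤ T pos then 1 else 0 := fun r => Finset.card_filter _ _
  calc ∑ r ∈ Finset.Icc 1 M, ((univ : Finset (Fin N)).filter (fun pos => r ≤ T pos)).card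
      = ∑ r ∈ Finset.Icc 1 M, ∑ pos, if r ≤ T pos then 1 else 0 :=
        Finset.sum_congr rfl (fun r _ => h1 r)
    _ = ∑ pos, ∑ r ∈ Finset.Icc 1 M, if r ≤ T pos then 1 else 0 := Finset.sum_comm
    _ = ∑ pos, T pos := by
        apply Finset.sum_congr rfl
        intro pos _
        rw [← Finset.card_filter]
        have : (Finset.Icc 1 M).filter (fun r => r ≤ T pos) = Finset.Icc 1 (T pos) := by
          ext r
          simp only [Finset.mem_filter, Finset.mem_Icc]
          have := hT pos
          omega
        rw [this, Nat.card_Icc]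
        omega

lemma scd_mem {m n : ℕ} (P : Profile m n) (a : Fin m) :
    Set.Nonempty {ℓ | ∃ Q, Reach AdjSwap ℓ P Q ∧ CondorcetTieWinner Q a} := by
  have h := realize P a (fun i => (P i a : ℕ)) (fun i => le_refl _) ?_
  · obtain ⟨Q, h1, h2⟩ := h
    exact ⟨_, Q, h1, h2⟩
  · intro b hb
    have hle : nAbove P b a ≤ passCnt P a (fun i => (P i a : ℕ)) b := by
      apply Finset.card_le_card
      intro i hi
      simp only [nAbove, mem_filter, mem_univ, true_and] at hi
      simp only [passCnt, mem_filter, mem_univ, true_and]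
      exact ⟨hi, Nat.le_add_left _ _⟩
    omega


end S17

open S17 in
/-- Cloning bound for the Dodgson score: if `P^k` is the profile in which every
vote of `P` is repeated `k` times, then
`Sc_D[P^k](a) ≤ k·Sc_D[P](a) < Sc_D[P^k](a) + k·(m−1)!·(m−1)·e`
(equivalently, the `k`-Dodgson score `Sc_D[P^k](a)/k` lies in the interval
`(Sc_D[P](a) − (m−1)!(m−1)e, Sc_D[P](a)]`). -/
theorem stmt_17 {m n : ℕ} (hm : 2 ≤ m) (P : Profile m n) (a : Fin m)
    (k : ℕ) (hk : 1 ≤ k) :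
    ScD (fun i : Fin (n * k) => P ((finProdFinEquiv.symm i).1)) a ≤ k * ScD P a ∧
    ((k * ScD P a : ℕ) : ℝ) <
      (ScD (fun i : Fin (n * k) => P ((finProdFinEquiv.symm i).1)) a : ℝ) +
        (k : ℝ) * Nat.factorial (m - 1) * ((m : ℝ) - 1) * Real.exp 1 := by
  classical
  set Pk : Profile m (n * k) := fun i : Fin (n * k) => P ((finProdFinEquiv.symm i).1) with hPk
  set ip : Fin (n * k) → Fin n := fun pos => (finProdFinEquiv.symm pos).1 with hip
  -- Part 1
  have part1 : ScD Pk a ≤ k * ScD P a := by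
    obtain ⟨Q, hQr, hQc⟩ := Nat.sInf_mem (scd_mem P a)
    obtain ⟨t, hta, hts, hpass⟩ := extract P Q a hQr hQc
    set tk : Fin (n * k) → ℕ := fun pos => t (ip pos) with htk
    have hpk : ∀ b, b ≠ a → nAbove Pk b a ≤ nAbove Pk a b + 2 * passCnt Pk a tk b := by
      intro b hb
      have e1 : nAbove Pk b a = k * nAbove P b a :=
        card_prodfin (fun i => P i b < P i a)
      have e2 : nAbove Pk a b = k * nAbove P a b :=
        card_prodfin (fun i => P i a < P i b)
      have e3 : passCnt Pk a tk b = k * passCnt P a t b :=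
        card_prodfin (fun i => P i b < P i a ∧ (P i a : ℕ) ≤ (P i b : ℕ) + t i)
      have h2 := Nat.mul_le_mul_left k (hpass b hb)
      rw [Nat.mul_add, Nat.mul_left_comm] at h2
      rw [e1, e2, e3]
      exact h2
    obtain ⟨Qk, hQkr, hQkc⟩ := realize Pk a tk (fun pos => hta (ip pos)) hpk
    have hsumtk : ∑ pos, tk pos = k * ∑ i, t i := sum_prodfin t
    calc ScD Pk a ≤ ∑ pos, tk pos := Nat.sInf_le ⟨Qk, hQkr, hQkc⟩
      _ = k * ∑ i, t i := hsumtk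
      _ ≤ k * ScD P a := Nat.mul_le_mul_left k hts
  refine ⟨part1, ?_⟩
  -- Part 2
  obtain ⟨Qk, hQkr, hQkc⟩ := Nat.sInf_mem (scd_mem Pk a)
  obtain ⟨T, hTa, hTs, hTpass⟩ := extract Pk Qk a hQkr hQkc
  set key : Fin n → (Fin m → ℕ) := fun i => keyF a (P i) with hkey
  set K : Finset (Fin m → ℕ) := univ.image key with hK
  set Cc : (Fin m → ℕ) → Finset (Fin n) := fun κ => univ.filter (fun i => key i = κ) with hCc
  set Sc : (Fin m → ℕ) → ℕ → ℕ := fun κ r =>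
    ((univ : Finset (Fin (n*k))).filter (fun pos => key (ip pos) = κ ∧ r ≤ T pos)).card with hSc
  have hTm : ∀ pos, T pos < m := fun pos => lt_of_le_of_lt (hTa pos) (Pk pos a).isLt
  -- classround hypotheses
  have hcr : ∀ κ, ∃ u : Fin n → ℕ,
      (∀ r, 1 ≤ r → Sc κ r ≤ k * ((Cc κ).filter (fun i => r ≤ u i)).card) ∧
      k * (∑ i ∈ Cc κ, u i) ≤ (∑ r ∈ Finset.Icc 1 m, Sc κ r) + k * (m - 1) := by
    intro κ
    apply classround (Cc κ) k m (Sc κ) hk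
    · intro r r' hr
      apply Finset.card_le_card
      intro pos hpos
      simp only [mem_filter, mem_univ, true_and] at hpos ⊢
      exact ⟨hpos.1, by omega⟩
    · intro r _
      have : Sc κ r ≤ ((univ : Finset (Fin (n*k))).filter (fun pos => key (ip pos) = κ)).card := by
        apply Finset.card_le_card
        intro pos hpos
        simp only [mem_filter, mem_univ, true_and] at hpos ⊢
        exact hpos.1
      calc Sc κ r ≤ _ := this
        _ = k * (Cc κ).card := card_prodfin (fun i => key i = κ)
    · intro r hr
      rw [hSc]
      simp only [Finset.card_eq_zero]
      apply Finset.filter_eq_empty_iff.mpr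
      intro pos _
      have := hTm pos
      rintro ⟨_, h2⟩
      omega
    · omega
  choose u hu1 hu2 using hcr
  set t' : Fin n → ℕ := fun i => u (key i) i with ht'
  set t'' : Fin n → ℕ := fun i => min (t' i) ((P i a : ℕ)) with ht''
  have hta'' : ∀ i, t'' i ≤ (P i a : ℕ) := fun i => min_le_right _ _
  -- pass condition
  have hpass'' : ∀ b, b ≠ a → nAbove P b a ≤ nAbove P a b + 2 * passCnt P a t'' b := by
    intro b hb
    have e1 : nAbove Pk b a = k * nAbove P b a := card_prodfin (fun i => P i b < P i a)
    have e2 : nAbove Pk a b = k * nAbove P a b := card_prodfin (fun i => P i a < P i b)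
    have hTp := hTpass b hb
    have hfib : passCnt Pk a T b = ∑ κ ∈ K, ((univ : Finset (Fin (n*k))).filter
        (fun pos => (Pk pos b < Pk pos a ∧ (Pk pos a : ℕ) ≤ (Pk pos b : ℕ) + T pos) ∧
          key (ip pos) = κ)).card := by
      rw [passCnt]
      rw [Finset.card_eq_sum_card_fiberwise (f := fun pos => key (ip pos)) (t := K)
        (fun pos _ => Finset.mem_image_of_mem key (mem_univ (ip pos)))]
      apply Finset.sum_congr rfl
      intro κ _
      rw [Finset.filter_filter]
    have hkb : ∀ i : Fin n, P i b < P i a → key i b = (P i a : ℕ) - (P i b : ℕ) := by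
      intro i hi
      simp only [hkey, keyF, if_pos hi]
    have hkb0 : ∀ i : Fin n, ¬ (P i b < P i a) → key i b = 0 := by
      intro i hi
      simp only [hkey, keyF, if_neg hi]
    have hclass : ∀ κ ∈ K, ((univ : Finset (Fin (n*k))).filter
        (fun pos => (Pk pos b < Pk pos a ∧ (Pk pos a : ℕ) ≤ (Pk pos b : ℕ) + T pos) ∧
          key (ip pos) = κ)).card
        ≤ k * ((Cc κ).filter
            (fun i => P i b < P i a ∧ (P i a : ℕ) ≤ (P i b : ℕ) + t'' i)).card := by
      intro κ _
      by_cases hκb : 1 ≤ κ b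
      · have h1 : ((univ : Finset (Fin (n*k))).filter
            (fun pos => (Pk pos b < Pk pos a ∧ (Pk pos a : ℕ) ≤ (Pk pos b : ℕ) + T pos) ∧
              key (ip pos) = κ)).card ≤ Sc κ (κ b) := by
          apply Finset.card_le_card
          intro pos hpos
          simp only [mem_filter, mem_univ, true_and] at hpos ⊢
          obtain ⟨⟨hlt, hle⟩, hkeq⟩ := hpos
          refine ⟨hkeq, ?_⟩
          have := hkb (ip pos) hlt
          rw [hkeq] at this
          have hltv : ((P (ip pos)) b : ℕ) < ((P (ip pos)) a : ℕ) := hlt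
          have ea : ((Pk pos) a : ℕ) = ((P (ip pos)) a : ℕ) := rfl
          have eb : ((Pk pos) b : ℕ) = ((P (ip pos)) b : ℕ) := rfl
          omega
        have h2 := hu1 κ (κ b) hκb
        have hsub2 : (Cc κ).filter (fun i => κ b ≤ u κ i) ⊆
            (Cc κ).filter (fun i => P i b < P i a ∧ (P i a : ℕ) ≤ (P i b : ℕ) + t'' i) := by
          intro i hi
          simp only [mem_filter, hCc, mem_univ, true_and] at hi ⊢
          obtain ⟨hkeq, hui⟩ := hi
          refine ⟨hkeq, ?_, ?_⟩
          · by_contra hno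
            have := hkb0 i hno
            rw [hkeq] at this
            omega
          · have hlt : P i b < P i a := by
              by_contra hno
              have := hkb0 i hno
              rw [hkeq] at this
              omega
            have hkv := hkb i hlt
            rw [hkeq] at hkv
            have ht'i : t' i = u κ i := by
              show u (key i) i = u κ i
              rw [hkeq]
            have hltv : ((P i) b : ℕ) < ((P i) a : ℕ) := hlt
            simp only [ht'']
            rw [ht'i]
            omega
        calc _ ≤ Sc κ (κ b) := h1
          _ ≤ k * ((Cc κ).filter (fun i => κ b ≤ u κ i)).card := h2
          _ ≤ _ := Nat.mul_le_mul_left k (Finset.card_le_card hsub2)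
      · have hempty : ((univ : Finset (Fin (n*k))).filter
            (fun pos => (Pk pos b < Pk pos a ∧ (Pk pos a : ℕ) ≤ (Pk pos b : ℕ) + T pos) ∧
              key (ip pos) = κ)) = ∅ := by
          apply Finset.filter_eq_empty_iff.mpr
          intro pos _
          rintro ⟨⟨hlt, _⟩, hkeq⟩
          have := hkb (ip pos) hlt
          rw [hkeq] at this
          have hltv : ((P (ip pos)) b : ℕ) < ((P (ip pos)) a : ℕ) := hlt
          omega
        rw [hempty]
        simp
    have hsum : passCnt Pk a T b ≤ k * passCnt P a t'' b := by
      rw [hfib]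
      calc _ ≤ ∑ κ ∈ K, k * ((Cc κ).filter
            (fun i => P i b < P i a ∧ (P i a : ℕ) ≤ (P i b : ℕ) + t'' i)).card :=
          Finset.sum_le_sum hclass
        _ = k * ∑ κ ∈ K, ((Cc κ).filter
            (fun i => P i b < P i a ∧ (P i a : ℕ) ≤ (P i b : ℕ) + t'' i)).card :=
          (Finset.mul_sum _ _ _).symm
        _ = k * passCnt P a t'' b := by
          congr 1
          rw [passCnt]
          rw [Finset.card_eq_sum_card_fiberwise (f := key) (t := K)
            (fun i _ => Finset.mem_image_of_mem key (mem_univ i))]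
          apply Finset.sum_congr rfl
          intro κ _
          show (((univ : Finset (Fin n)).filter (fun i => key i = κ)).filter
              (fun i => P i b < P i a ∧ (P i a : ℕ) ≤ (P i b : ℕ) + t'' i)).card = _
          rw [Finset.filter_filter, Finset.filter_filter]
          congr 1
          apply Finset.filter_congr
          intro i _
          tauto
    have hfin : k * nAbove P b a ≤ k * (nAbove P a b + 2 * passCnt P a t'' b) := by
      rw [e1, e2] at hTp
      calc k * nAbove P b a ≤ k * nAbove P a b + 2 * passCnt Pk a T b := hTp
        _ ≤ k * nAbove P a b + 2 * (k * passCnt P a t'' b) := by omega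
        _ = k * (nAbove P a b + 2 * passCnt P a t'' b) := by ring
    exact Nat.le_of_mul_le_mul_left hfin (by omega)
  obtain ⟨Q', hQ'r, hQ'c⟩ := realize P a t'' hta'' hpass''
  have hScD : ScD P a ≤ ∑ i, t'' i := Nat.sInf_le ⟨Q', hQ'r, hQ'c⟩
  -- cost bound
  have hcost : k * (∑ i, t'' i) ≤ ScD Pk a + k * (m - 1) * K.card := by
    have hfibsum : ∑ κ ∈ K, ∑ i ∈ Cc κ, t' i = ∑ i, t' i :=
      Finset.sum_fiberwise_of_maps_to (fun i _ => Finset.mem_image_of_mem key (mem_univ i)) t'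
    have hcls : ∀ κ ∈ K, ∑ i ∈ Cc κ, t' i = ∑ i ∈ Cc κ, u κ i := by
      intro κ _
      apply Finset.sum_congr rfl
      intro i hi
      simp only [hCc, mem_filter, mem_univ, true_and] at hi
      show u (key i) i = u κ i
      rw [hi]
    have h5 : ∀ r, ∑ κ ∈ K, Sc κ r
        = ((univ : Finset (Fin (n*k))).filter (fun pos => r ≤ T pos)).card := by
      intro r
      rw [Finset.card_eq_sum_card_fiberwise (f := fun pos => key (ip pos)) (t := K)
        (fun pos _ => Finset.mem_image_of_mem key (mem_univ (ip pos)))]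
      apply Finset.sum_congr rfl
      intro κ _
      show ((univ : Finset (Fin (n*k))).filter (fun pos => key (ip pos) = κ ∧ r ≤ T pos)).card
        = (((univ : Finset (Fin (n*k))).filter (fun pos => r ≤ T pos)).filter
            (fun pos => key (ip pos) = κ)).card
      rw [Finset.filter_filter]
      congr 1
      apply Finset.filter_congr
      intro pos _
      tauto
    have h6 : ∑ r ∈ Finset.Icc 1 m, ((univ : Finset (Fin (n*k))).filter
        (fun pos => r ≤ T pos)).card = ∑ pos, T pos := layercake T hTm
    have hmain : k * (∑ i, t' i) ≤ (∑ pos, T pos) + K.card * (k * (m - 1)) := by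
      calc k * (∑ i, t' i) = k * ∑ κ ∈ K, ∑ i ∈ Cc κ, t' i := by rw [hfibsum]
        _ = ∑ κ ∈ K, k * ∑ i ∈ Cc κ, t' i := Finset.mul_sum _ _ _
        _ = ∑ κ ∈ K, k * ∑ i ∈ Cc κ, u κ i := by
            apply Finset.sum_congr rfl
            intro κ hκ
            rw [hcls κ hκ]
        _ ≤ ∑ κ ∈ K, ((∑ r ∈ Finset.Icc 1 m, Sc κ r) + k * (m - 1)) :=
            Finset.sum_le_sum (fun κ _ => hu2 κ)
        _ = (∑ κ ∈ K, ∑ r ∈ Finset.Icc 1 m, Sc κ r) + K.card * (k * (m - 1)) := by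
            rw [Finset.sum_add_distrib, Finset.sum_const, smul_eq_mul]
        _ = (∑ r ∈ Finset.Icc 1 m, ∑ κ ∈ K, Sc κ r) + K.card * (k * (m - 1)) := by
            rw [Finset.sum_comm]
        _ = (∑ pos, T pos) + K.card * (k * (m - 1)) := by
            rw [Finset.sum_congr rfl (fun r _ => h5 r), h6]
    have hmono : ∑ i, t'' i ≤ ∑ i, t' i :=
      Finset.sum_le_sum (fun i _ => min_le_left _ _)
    calc k * (∑ i, t'' i) ≤ k * (∑ i, t' i) := Nat.mul_le_mul_left k hmono
      _ ≤ (∑ pos, T pos) + K.card * (k * (m - 1)) := hmain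
      _ ≤ ScD Pk a + k * (m - 1) * K.card := by
          have hTs' : (∑ pos, T pos) ≤ ScD Pk a := hTs
          have e : K.card * (k * (m - 1)) = k * (m - 1) * K.card := by ring
          omega
  -- real arithmetic
  have hKcard : (K.card : ℝ) < (m-1).factorial * Real.exp 1 := by
    have himg : K = (univ.image (fun i => stackOf a (P i))).image (keyS a) := by
      rw [Finset.image_image]
      exact Finset.image_congr (fun i _ => (keyS_stackOf a (P i)).symm)
    have h1 : K.card ≤ (univ.image (fun i => stackOf a (P i))).card := by
      rw [himg]
      exact Finset.card_image_le
    have h2 : (univ.image (fun i => stackOf a (P i))).card ≤ Fintype.card (stackT m a) :=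
      Finset.card_le_univ _
    have h3 := sum_descF_lt (m := m) hm
    calc (K.card : ℝ) ≤ ((∑ j ∈ Finset.range m, (m-1).descFactorial j : ℕ) : ℝ) := by
          rw [← card_stackT a]
          exact_mod_cast le_trans h1 h2
      _ < (m-1).factorial * Real.exp 1 := h3
  have hfinal : k * ScD P a ≤ ScD Pk a + k * (m - 1) * K.card := by
    calc k * ScD P a ≤ k * ∑ i, t'' i := Nat.mul_le_mul_left k hScD
      _ ≤ _ := hcost
  have e4 : ((m - 1 : ℕ) : ℝ) = (m : ℝ) - 1 := by
    rw [Nat.cast_sub (by omega : 1 ≤ m)]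
    norm_num
  have hposR : (0:ℝ) < (k:ℝ) * ((m:ℝ) - 1) := by
    have h1 : (1:ℝ) ≤ (k:ℝ) := by exact_mod_cast hk
    have h2 : (2:ℝ) ≤ (m:ℝ) := by exact_mod_cast hm
    nlinarith
  have hle1 : ((k * ScD P a : ℕ) : ℝ) ≤
      (ScD Pk a : ℝ) + ((k:ℝ) * ((m:ℝ) - 1)) * (K.card : ℝ) := by
    have hc := (Nat.cast_le (α := ℝ)).2 hfinal
    push_cast at hc
    rw [e4] at hc
    push_cast
    linarith
  have hlt2 : ((k:ℝ) * ((m:ℝ) - 1)) * (K.card : ℝ) <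
      ((k:ℝ) * ((m:ℝ) - 1)) * (((m-1).factorial : ℝ) * Real.exp 1) :=
    mul_lt_mul_of_pos_left hKcard hposR
  calc ((k * ScD P a : ℕ) : ℝ) ≤
        (ScD Pk a : ℝ) + ((k:ℝ) * ((m:ℝ) - 1)) * (K.card : ℝ) := hle1
    _ < (ScD Pk a : ℝ) + ((k:ℝ) * ((m:ℝ) - 1)) * (((m-1).factorial : ℝ) * Real.exp 1) := by
        linarith
    _ = (ScD Pk a : ℝ) + (k : ℝ) * ((m-1).factorial : ℝ) * ((m:ℝ) - 1) * Real.exp 1 := by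
        ring
end
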